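/- arXiv:2603.14370 — 5 statements merged into one kernel-verified Lean document; each statement's English description precedes it below -/
import Mathlib

section
/- Let λ be a partition of n, c a removable corner, and a₁, a₂ two distinct addable corners such that both transfers μ₁ = λ(c→a₁) and μ₂ = λ(c→a₂) are admissible. Then μ₁ and μ₂ are adjacent in the partition graph G_n; consequently λ, μ₁, μ₂ span a triangle in G_n. -/
open Finset

/-- A partition of `n`: a finitely supported weakly decreasing sequence of
row lengths (rows indexed from `0`) summing to `n`. -/
structure NPartition (n : ℕ) where
  parts : ℕ →₀ ℕ
  antitone : ∀ ⦃i j : ℕ⦄, i ≤ j → parts j ≤ parts i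
  total : parts.sum (fun _ m => m) = n

namespace NPartition

variable {n : ℕ}

/-- The multiset of (positive) row lengths of a partition. -/
def rows (f : NPartition n) : Multiset ℕ := f.parts.support.val.map f.parts

/-- `conj f j` is the number of rows of length at least `j + 1`; i.e. the length of
the `(j+1)`-st column (columns indexed from `0`), the conjugate partition `λ'`. -/
def conj (f : NPartition n) (j : ℕ) : ℕ :=
  (f.rows.filter (fun m => j + 1 ≤ m)).card

/-- The height `h(λ) = ∑ i · λ_i`, rows indexed from `1`. -/
def height (f : NPartition n) : ℕ :=
  ∑ i ∈ f.parts.support, (i + 1) * f.parts i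

/-- Row `r` (0-indexed) of `f` carries a removable corner: removing its last cell
again yields a partition. -/
def IsRemovableRow (f : NPartition n) (r : ℕ) : Prop :=
  f.parts (r + 1) < f.parts r

/-- Row `r` (0-indexed) of `f` carries an addable corner: adding a cell at the end
of this row again yields a partition. -/
def IsAddableRow (f : NPartition n) (r : ℕ) : Prop :=
  r = 0 ∨ f.parts r < f.parts (r - 1)

/-- The multiset of rows obtained from `f` by removing one cell from the corner in
row `rc` and adding one cell at the corner in row `ra` (zero rows discarded);
reordering is built in since this is a multiset. -/
def transferRows (f : NPartition n) (rc ra : ℕ) : Multiset ℕ :=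
  ((f.rows.erase (f.parts rc)).erase (f.parts ra))
    + Multiset.filter (fun m => 0 < m) {f.parts rc - 1, f.parts ra + 1}

/-- `IsTransfer f g rc ra` : `g = λ(c → a)` is obtained from `f = λ` by the admissible
transfer of one cell from the removable corner `c` in row `rc` to the addable corner
`a` in row `ra ≠ rc`, followed by reordering, and `g ≠ f`. -/
def IsTransfer (f g : NPartition n) (rc ra : ℕ) : Prop :=
  f.IsRemovableRow rc ∧ f.IsAddableRow ra ∧ rc ≠ ra ∧ g ≠ f ∧
    g.rows = f.transferRows rc ra

/-- Adjacency in the partition graph `G_n`. -/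
def Adj (f g : NPartition n) : Prop :=
  (∃ rc ra, IsTransfer f g rc ra) ∨ (∃ rc ra, IsTransfer g f rc ra)

/-- The one-row partition `(n)`. -/
noncomputable def onerow (n : ℕ) : NPartition n where
  parts := Finsupp.single 0 n
  antitone := by
    intro i j hij
    by_cases hi : i = 0
    · subst hi
      by_cases hj : j = 0 <;> simp [Finsupp.single_apply, eq_comm, hj]
    · have hj : j ≠ 0 := by omega
      simp [Finsupp.single_apply, eq_comm, hi, hj]
  total := Finsupp.sum_single_index rfl

/-! ### Auxiliary machinery -/

/-- Number of elements of a multiset that are `≥ j + 1`. -/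
def cnt (s : Multiset ℕ) (j : ℕ) : ℕ := (s.filter (fun m => j + 1 ≤ m)).card

lemma conj_eq_cnt (f : NPartition n) (j : ℕ) : f.conj j = cnt f.rows j := rfl

lemma rows_pos (f : NPartition n) : ∀ m ∈ f.rows, 0 < m := by
  intro m hm
  obtain ⟨i, hi, rfl⟩ := Multiset.mem_map.mp hm
  have hi' : i ∈ f.parts.support := hi
  have := Finsupp.mem_support_iff.mp hi'
  omega

lemma cnt_step (s : Multiset ℕ) (v : ℕ) :
    cnt s v = cnt s (v + 1) + s.count (v + 1) := by
  induction s using Multiset.induction_on with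
  | empty => simp [cnt]
  | cons a t ih =>
    simp only [cnt, Multiset.filter_cons, Multiset.count_cons, Multiset.card_add] at *
    split_ifs <;> simp_all <;> omega

lemma eq_of_cnt_eq {s t : Multiset ℕ} (hs : ∀ m ∈ s, 0 < m) (ht : ∀ m ∈ t, 0 < m)
    (h : ∀ j, cnt s j = cnt t j) : s = t := by
  ext v
  cases v with
  | zero =>
    rw [Multiset.count_eq_zero_of_notMem (fun h0 => absurd (hs 0 h0) (lt_irrefl 0)),
      Multiset.count_eq_zero_of_notMem (fun h0 => absurd (ht 0 h0) (lt_irrefl 0))]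
  | succ v =>
    have h1 := cnt_step s v; have h2 := cnt_step t v
    have h3 := h v; have h4 := h (v + 1); omega

lemma cnt_erase {s : Multiset ℕ} {a : ℕ} (ha : a ∈ s) (j : ℕ) :
    cnt (s.erase a) j + (if j + 1 ≤ a then 1 else 0) = cnt s j := by
  conv_rhs => rw [← Multiset.cons_erase ha]
  simp only [cnt, Multiset.filter_cons, Multiset.card_add]
  split_ifs <;>
    simp only [Multiset.empty_eq_zero, Multiset.card_singleton, Multiset.card_zero] <;> omega

lemma lt_conj_iff (f : NPartition n) (i v : ℕ) : i < f.conj v ↔ v + 1 ≤ f.parts i := by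
  classical
  have hc : f.conj v = (f.parts.support.filter (fun i => v + 1 ≤ f.parts i)).card := by
    simp only [conj, rows, Multiset.filter_map]
    rw [Multiset.card_map]
    rfl
  set S := f.parts.support.filter (fun i => v + 1 ≤ f.parts i) with hS
  have hmemS : ∀ i, i ∈ S ↔ v + 1 ≤ f.parts i := by
    intro i
    simp only [hS, Finset.mem_filter, Finsupp.mem_support_iff]
    constructor
    · tauto
    · intro h; exact ⟨by omega, h⟩
  rw [hc]
  constructor
  · intro h
    by_contra hle
    push_neg at hle
    have hsub : S ⊆ Finset.range i := by
      intro j hj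
      have hj' := (hmemS j).mp hj
      rw [Finset.mem_range]
      by_contra hji
      push_neg at hji
      have := f.antitone hji
      omega
    have := Finset.card_le_card hsub
    simp [Finset.card_range] at this
    omega
  · intro h
    have hsub : Finset.Iic i ⊆ S := by
      intro j hj
      rw [Finset.mem_Iic] at hj
      exact (hmemS j).mpr (le_trans h (f.antitone hj))
    have := Finset.card_le_card hsub
    simp [Nat.card_Iic] at this
    omega

lemma ext_conj {f g : NPartition n} (h : ∀ j, f.conj j = g.conj j) : f = g := by
  have hp : f.parts = g.parts := by
    ext i
    by_contra hne
    rcases Nat.lt_or_ge (f.parts i) (g.parts i) with hlt | hge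
    · have h1 := (lt_conj_iff g i (f.parts i)).mpr hlt
      rw [← h] at h1
      have h2 := (lt_conj_iff f i (f.parts i)).mp h1
      omega
    · have hlt : g.parts i < f.parts i := by omega
      have h1 := (lt_conj_iff f i (g.parts i)).mpr hlt
      rw [h] at h1
      have h2 := (lt_conj_iff g i (g.parts i)).mp h1
      omega
  cases f; cases g; cases hp; rfl

lemma conj_succ_le (g : NPartition n) (v : ℕ) : g.conj (v + 1) ≤ g.conj v := by
  have := cnt_step g.rows v
  simp only [← conj_eq_cnt] at this
  omega

lemma parts_bounds (g : NPartition n) (i : ℕ) :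
    g.conj (g.parts i) ≤ i ∧ (0 < g.parts i → i < g.conj (g.parts i - 1)) := by
  constructor
  · by_contra h
    push_neg at h
    have := (lt_conj_iff g i (g.parts i)).mp h
    omega
  · intro h0
    exact (lt_conj_iff g i _).mpr (by omega)

lemma cnt_pair_pos (x y j : ℕ) :
    cnt (Multiset.filter (fun m => 0 < m) {x, y}) j
      = (if j + 1 ≤ x then 1 else 0) + (if j + 1 ≤ y then 1 else 0) := by
  rw [cnt, Multiset.filter_filter]
  simp only [Multiset.insert_eq_cons, Multiset.filter_cons, Multiset.filter_singleton,
    Multiset.card_add, apply_ite Multiset.card]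
  split_ifs <;>
    simp only [Multiset.empty_eq_zero, Multiset.card_singleton, Multiset.card_zero] <;> omega

lemma cnt_transferRows (f : NPartition n) {rc ra : ℕ} (hrm : f.IsRemovableRow rc)
    (hne : rc ≠ ra) (j : ℕ) :
    cnt (f.transferRows rc ra) j + (if j + 1 = f.parts rc then 1 else 0)
      = f.conj j + (if j = f.parts ra then 1 else 0) := by
  classical
  have hpc : 0 < f.parts rc := lt_of_le_of_lt (Nat.zero_le _) hrm
  have hmempc : f.parts rc ∈ f.rows := by
    refine Multiset.mem_map.mpr ⟨rc, ?_, rfl⟩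
    exact Finset.mem_def.mp (Finsupp.mem_support_iff.mpr (by omega))
  have h1 : cnt (f.rows.erase (f.parts rc)) j + (if j + 1 ≤ f.parts rc then 1 else 0)
      = f.conj j := by
    rw [conj_eq_cnt]; exact cnt_erase hmempc j
  have h2 : cnt ((f.rows.erase (f.parts rc)).erase (f.parts ra)) j
        + (if j + 1 ≤ f.parts ra then 1 else 0)
      = cnt (f.rows.erase (f.parts rc)) j := by
    rcases Nat.eq_zero_or_pos (f.parts ra) with h0 | h0
    · rw [h0]
      have hnm : (0 : ℕ) ∉ f.rows.erase (f.parts rc) := fun hm =>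
        absurd (rows_pos f 0 (Multiset.mem_of_mem_erase hm)) (lt_irrefl 0)
      rw [Multiset.erase_of_notMem hnm]
      simp
    · have hmem2 : f.parts ra ∈ f.rows.erase (f.parts rc) := by
        by_cases hpp : f.parts ra = f.parts rc
        · -- two distinct indices with the same value
          rw [hpp]
          rw [← Multiset.count_pos, Multiset.count_erase_self]
          have hcard : 2 ≤ f.rows.count (f.parts rc) := by
            have : f.rows.count (f.parts rc)
                = (f.parts.support.val.filter (fun i => f.parts rc = f.parts i)).card := by
              simp [rows, Multiset.count_map, Multiset.countP_eq_card_filter]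
            rw [this]
            have hsub : ({rc, ra} : Finset ℕ)
                ⊆ f.parts.support.filter (fun i => f.parts rc = f.parts i) := by
              intro x hx
              rcases Finset.mem_insert.mp hx with rfl | hx
              · exact Finset.mem_filter.mpr
                  ⟨Finsupp.mem_support_iff.mpr (by omega), rfl⟩
              · rcases Finset.mem_singleton.mp hx with rfl
                exact Finset.mem_filter.mpr
                  ⟨Finsupp.mem_support_iff.mpr (by omega), hpp.symm⟩
            have := Finset.card_le_card hsub
            rwa [Finset.card_pair hne] at this
          omega
        · rw [Multiset.mem_erase_of_ne hpp]
          refine Multiset.mem_map.mpr ⟨ra, ?_, rfl⟩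
          exact Finset.mem_def.mp (Finsupp.mem_support_iff.mpr (by omega))
      exact cnt_erase hmem2 j
  have h3 : cnt (f.transferRows rc ra) j
      = cnt ((f.rows.erase (f.parts rc)).erase (f.parts ra)) j
        + ((if j + 1 ≤ f.parts rc - 1 then 1 else 0)
          + (if j + 1 ≤ f.parts ra + 1 then 1 else 0)) := by
    rw [transferRows]
    simp only [cnt, Multiset.filter_add, Multiset.card_add]
    rw [← cnt_pair_pos (f.parts rc - 1) (f.parts ra + 1) j]
    rfl
  rw [h3]
  split_ifs at h1 h2 ⊢ <;> omega

lemma conj_transfer {f g : NPartition n} {rc ra : ℕ} (h : IsTransfer f g rc ra) (j : ℕ) :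
    g.conj j + (if j + 1 = f.parts rc then 1 else 0)
      = f.conj j + (if j = f.parts ra then 1 else 0) := by
  obtain ⟨hrm, _, hne, _, hrows⟩ := h
  rw [conj_eq_cnt, hrows]
  exact cnt_transferRows f hrm hne j

lemma exists_removable (g : NPartition n) {v : ℕ} (h : g.conj (v + 1) < g.conj v) :
    ∃ r, g.IsRemovableRow r ∧ g.parts r = v + 1 ∧ r + 1 = g.conj v := by
  have h1 : v + 1 ≤ g.parts (g.conj v - 1) :=
    (lt_conj_iff g _ v).mp (by omega)
  have h2 : ¬ (v + 1 + 1 ≤ g.parts (g.conj v - 1)) := fun hh => by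
    have := (lt_conj_iff g (g.conj v - 1) (v + 1)).mpr hh
    omega
  have h3 : ¬ (v + 1 ≤ g.parts (g.conj v - 1 + 1)) := fun hh => by
    have := (lt_conj_iff g (g.conj v - 1 + 1) v).mpr hh
    omega
  refine ⟨g.conj v - 1, ?_, by omega, by omega⟩
  unfold IsRemovableRow
  omega

lemma exists_addable (g : NPartition n) {v : ℕ}
    (h : v = 0 ∨ g.conj v < g.conj (v - 1)) :
    ∃ r, g.IsAddableRow r ∧ g.parts r = v ∧ r = g.conj v := by
  refine ⟨g.conj v, ?_, ?_, rfl⟩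
  · rcases Nat.eq_zero_or_pos (g.conj v) with h0 | h0
    · exact Or.inl h0
    · refine Or.inr ?_
      have hhi : v + 1 ≤ g.parts (g.conj v - 1) :=
        (lt_conj_iff g _ v).mp (by omega)
      have hlo : ¬ (v + 1 ≤ g.parts (g.conj v)) := fun hh => by
        have := (lt_conj_iff g (g.conj v) v).mpr hh
        omega
      omega
  · have hlo : ¬ (v + 1 ≤ g.parts (g.conj v)) := fun hh => by
      have := (lt_conj_iff g (g.conj v) v).mpr hh
      omega
    rcases h with rfl | h
    · omega
    · have hv : 0 < v := by
        rcases Nat.eq_zero_or_pos v with rfl | hv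
        · simp at h
        · exact hv
      have := (lt_conj_iff g (g.conj v) (v - 1)).mp (by omega)
      omega

lemma transferRows_pos (f : NPartition n) (rc ra : ℕ) :
    ∀ m ∈ f.transferRows rc ra, 0 < m := by
  intro m hm
  rcases Multiset.mem_add.mp hm with h | h
  · exact rows_pos f m (Multiset.mem_of_mem_erase (Multiset.mem_of_mem_erase h))
  · exact (Multiset.mem_filter.mp h).2

end NPartition

/-- If `c` is a removable corner of `λ` and `a₁ ≠ a₂` are distinct
addable corners such that both transfers `μ₁ = λ(c → a₁)` and `μ₂ = λ(c → a₂)` are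
admissible, then `μ₁` and `μ₂` are adjacent in `G_n`; consequently `λ, μ₁, μ₂` span a
triangle in `G_n`. -/
theorem star_triangle {n : ℕ} (f g₁ g₂ : NPartition n) (rc ra₁ ra₂ : ℕ)
    (h₁ : NPartition.IsTransfer f g₁ rc ra₁)
    (h₂ : NPartition.IsTransfer f g₂ rc ra₂)
    (ha : ra₁ ≠ ra₂) :
    NPartition.Adj g₁ g₂ ∧
      g₁ ≠ g₂ ∧ NPartition.Adj f g₁ ∧ NPartition.Adj f g₂ := by
  classical
  obtain ⟨hrm, had1, hne1, hgne1, hrows1⟩ := h₁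
  obtain ⟨hrm2, had2, hne2, hgne2, hrows2⟩ := h₂
  have E1 : ∀ j, g₁.conj j + (if j + 1 = f.parts rc then 1 else 0)
      = f.conj j + (if j = f.parts ra₁ then 1 else 0) :=
    fun j => NPartition.conj_transfer ⟨hrm, had1, hne1, hgne1, hrows1⟩ j
  have E2 : ∀ j, g₂.conj j + (if j + 1 = f.parts rc then 1 else 0)
      = f.conj j + (if j = f.parts ra₂ then 1 else 0) :=
    fun j => NPartition.conj_transfer ⟨hrm2, had2, hne2, hgne2, hrows2⟩ j
  have hp12 : f.parts ra₁ ≠ f.parts ra₂ := by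
    have key : ∀ a b : ℕ, a < b → f.IsAddableRow b → f.parts b ≠ f.parts a := by
      intro a b hab hb hv
      rcases hb with rfl | hb
      · omega
      · have := f.antitone (show a ≤ b - 1 by omega)
        omega
    rcases Nat.lt_or_ge ra₁ ra₂ with hlt | hge
    · exact (key ra₁ ra₂ hlt had2).symm
    · exact key ra₂ ra₁ (by omega) had1
  have hpc1 : f.parts rc ≠ f.parts ra₁ + 1 := by
    intro hh
    apply hgne1
    apply NPartition.ext_conj
    intro j
    have := E1 j
    split_ifs at this <;> omega
  have Brc := NPartition.parts_bounds f rc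
  have Bra2 := NPartition.parts_bounds f ra₂
  have hpc_pos : 0 < f.parts rc := lt_of_le_of_lt (Nat.zero_le _) hrm
  have S1 := NPartition.conj_succ_le f (f.parts ra₁)
  -- a removable corner of value `p₁ + 1` in `g₁`
  have hrex : g₁.conj (f.parts ra₁ + 1) < g₁.conj (f.parts ra₁) := by
    have e1 := E1 (f.parts ra₁)
    have e2 := E1 (f.parts ra₁ + 1)
    split_ifs at e1 e2 <;> omega
  obtain ⟨rc', hrc'rem, hrc'val, hrc'idx⟩ := NPartition.exists_removable g₁ hrex
  -- an addable corner of value `p₂` in `g₁`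
  have haex : f.parts ra₂ = 0 ∨ g₁.conj (f.parts ra₂) < g₁.conj (f.parts ra₂ - 1) := by
    rcases Nat.eq_zero_or_pos (f.parts ra₂) with h0 | h0
    · exact Or.inl h0
    · refine Or.inr ?_
      have e1 := E1 (f.parts ra₂ - 1)
      have e2 := E1 (f.parts ra₂)
      rw [show f.parts ra₂ - 1 + 1 = f.parts ra₂ from by omega] at e1
      have hb1 : f.conj (f.parts ra₂) ≤ ra₂ := Bra2.1
      have hb2 : ra₂ < f.conj (f.parts ra₂ - 1) := Bra2.2 h0
      by_cases hcc : f.parts ra₂ = f.parts rc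
      · have hb3 : f.conj (f.parts ra₂) ≤ rc := by rw [hcc]; exact Brc.1
        have hb4 : rc < f.conj (f.parts ra₂ - 1) := by rw [hcc]; exact Brc.2 hpc_pos
        split_ifs at e1 e2 <;> omega
      · split_ifs at e1 e2 <;> omega
  obtain ⟨ra', hra'add, hra'val, hra'idx⟩ := NPartition.exists_addable g₁ haex
  -- the two corners of `g₁` are in different rows
  have hne' : rc' ≠ ra' := by
    by_cases hval : f.parts ra₁ + 1 = f.parts ra₂
    · have e1 := E1 (f.parts ra₁)
      have e2 := E1 (f.parts ra₁ + 1)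
      have hb1 : f.conj (f.parts ra₂) ≤ ra₂ := Bra2.1
      have hb2 : ra₂ < f.conj (f.parts ra₂ - 1) := Bra2.2 (by omega)
      rw [← hval] at hb1 hb2
      simp only [Nat.add_sub_cancel] at hb2
      rw [← hval] at hra'idx
      split_ifs at e1 e2 <;> omega
    · intro hh
      rw [hh, hra'val] at hrc'val
      exact hval hrc'val.symm
  have hg21 : g₂ ≠ g₁ := by
    intro hh
    have e1 := E1 (f.parts ra₁)
    have e2 := E2 (f.parts ra₁)
    rw [hh] at e2
    split_ifs at e1 e2 <;> omega
  have hT : g₂.rows = g₁.transferRows rc' ra' := by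
    apply NPartition.eq_of_cnt_eq (NPartition.rows_pos g₂) (NPartition.transferRows_pos g₁ rc' ra')
    intro j
    have hmain := NPartition.cnt_transferRows g₁ hrc'rem hne' j
    rw [hrc'val, hra'val] at hmain
    have e1 := E1 j
    have e2 := E2 j
    rw [← NPartition.conj_eq_cnt]
    split_ifs at hmain e1 e2 <;> omega
  exact ⟨Or.inl ⟨rc', ra', hrc'rem, hra'add, hne', hg21, hT⟩, fun hh => hg21 hh.symm,
    Or.inl ⟨rc, ra₁, hrm, had1, hne1, hgne1, hrows1⟩,
    Or.inl ⟨rc, ra₂, hrm2, had2, hne2, hgne2, hrows2⟩⟩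
end

section
/- Let λ be a partition of n, a an addable corner, and c₁, c₂ two distinct removable corners such that both transfers μ₁ = λ(c₁→a) and μ₂ = λ(c₂→a) are admissible. Then μ₁ and μ₂ are adjacent in the partition graph G_n; consequently λ, μ₁, μ₂ span a triangle in G_n. -/
open Finset

namespace NPartition

variable {n : ℕ}

-- my lemmas
lemma mem_rows_iff {p : NPartition n} {m : ℕ} : m ∈ p.rows ↔ (∃ i, p.parts i = m) ∧ m ≠ 0 := by
  constructor
  · intro h
    obtain ⟨i, hi, hv⟩ := Multiset.mem_map.1 h
    have : p.parts i ≠ 0 := Finsupp.mem_support_iff.1 hi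
    exact ⟨⟨i, hv⟩, hv ▸ this⟩
  · rintro ⟨⟨i, rfl⟩, hm⟩
    exact Multiset.mem_map.2 ⟨i, Finsupp.mem_support_iff.2 hm, rfl⟩

lemma count_zero_rows (p : NPartition n) : Multiset.count 0 p.rows = 0 :=
  Multiset.count_eq_zero.2 (fun h => (mem_rows_iff.1 h).2 rfl)

lemma conj_card {p : NPartition n} (m : ℕ) :
    p.conj m = ((p.parts.support.filter fun r => m + 1 ≤ p.parts r)).card := by
  rw [conj, ← Multiset.countP_eq_card_filter, rows, Multiset.countP_map]
  rfl

lemma lt_conj_iff_s7 {p : NPartition n} {i m : ℕ} : i < p.conj m ↔ m + 1 ≤ p.parts i := by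
  rw [conj_card]
  constructor
  · intro h
    obtain ⟨r, hr, hri⟩ : ∃ r ∈ p.parts.support.filter (fun r => m + 1 ≤ p.parts r), i ≤ r := by
      by_contra hco
      push_neg at hco
      have hsub : p.parts.support.filter (fun r => m + 1 ≤ p.parts r) ⊆ Finset.range i :=
        fun r hr => Finset.mem_range.2 (hco r hr)
      have := Finset.card_le_card hsub
      rw [Finset.card_range] at this
      omega
    exact le_trans (Finset.mem_filter.1 hr).2 (p.antitone hri)
  · intro h
    have hsub : Finset.range (i + 1) ⊆ p.parts.support.filter (fun r => m + 1 ≤ p.parts r) := by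
      intro r hr
      have hri : r ≤ i := Nat.lt_succ_iff.1 (Finset.mem_range.1 hr)
      have h2 : m + 1 ≤ p.parts r := le_trans h (p.antitone hri)
      exact Finset.mem_filter.2 ⟨Finsupp.mem_support_iff.2 (by omega), h2⟩
    have := Finset.card_le_card hsub
    rw [Finset.card_range] at this
    omega

lemma countP_succ (s : Multiset ℕ) (m : ℕ) :
    Multiset.countP (fun k => m ≤ k) s
      = Multiset.countP (fun k => m + 1 ≤ k) s + Multiset.count m s := by
  induction s using Multiset.induction_on with
  | empty => simp
  | cons a s ih =>
    rw [Multiset.countP_cons, Multiset.countP_cons, Multiset.count_cons, ih]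
    split_ifs <;> omega

lemma conj_pred {p : NPartition n} {m : ℕ} (hm : 0 < m) :
    p.conj (m - 1) = p.conj m + Multiset.count m p.rows := by
  have h1 : m - 1 + 1 = m := by omega
  rw [conj, conj, ← Multiset.countP_eq_card_filter, ← Multiset.countP_eq_card_filter, h1,
    countP_succ]

lemma count_erase (s : Multiset ℕ) (a v : ℕ) :
    Multiset.count v (s.erase a) = Multiset.count v s - if v = a then 1 else 0 := by
  rcases eq_or_ne v a with rfl | h
  · simp [Multiset.count_erase_self]
  · simp [Multiset.count_erase_of_ne h, h]

lemma count_transferRows (p : NPartition n) (rc ra v : ℕ) :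
    Multiset.count v (p.transferRows rc ra) =
      Multiset.count v p.rows - (if v = p.parts rc then 1 else 0)
        - (if v = p.parts ra then 1 else 0)
        + (if v = p.parts rc - 1 ∧ 0 < p.parts rc - 1 then 1 else 0)
        + (if v = p.parts ra + 1 then 1 else 0) := by
  rw [transferRows, Multiset.count_add, count_erase, count_erase, Multiset.count_filter]
  rw [show ({p.parts rc - 1, p.parts ra + 1} : Multiset ℕ)
      = (p.parts rc - 1) ::ₘ {p.parts ra + 1} from rfl,
    Multiset.count_cons, Multiset.count_singleton]
  split_ifs <;> omega

lemma one_le_count_rows {p : NPartition n} (i : ℕ) (h : 0 < p.parts i) :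
    1 ≤ Multiset.count (p.parts i) p.rows :=
  Multiset.count_pos.2 (mem_rows_iff.2 ⟨⟨i, rfl⟩, by omega⟩)

lemma two_le_count_rows {p : NPartition n} {i j : ℕ} (hij : i ≠ j) (h : p.parts i = p.parts j)
    (hp : 0 < p.parts i) : 2 ≤ Multiset.count (p.parts i) p.rows := by
  rw [rows, Multiset.count_map]
  have hsub : ({i, j} : Finset ℕ) ⊆ p.parts.support.filter (fun a => p.parts i = p.parts a) := by
    intro r hr
    rcases Finset.mem_insert.1 hr with rfl | hr
    · exact Finset.mem_filter.2 ⟨Finsupp.mem_support_iff.2 (by omega), rfl⟩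
    · rw [Finset.mem_singleton.1 hr]
      exact Finset.mem_filter.2 ⟨Finsupp.mem_support_iff.2 (by omega), h⟩
  have hcard := Finset.card_le_card hsub
  rw [Finset.card_pair hij] at hcard
  simpa [Finset.card, Finset.filter] using hcard

lemma exists_removable_s7 {p : NPartition n} {m : ℕ} (hm : 0 < m) (h : m ∈ p.rows) :
    ∃ r, p.parts r = m ∧ p.IsRemovableRow r ∧ r + 1 = p.conj (m - 1) := by
  obtain ⟨⟨i, hi⟩, -⟩ := mem_rows_iff.1 h
  have hm1 : m - 1 + 1 = m := by omega
  have hik : i < p.conj (m - 1) := lt_conj_iff_s7.2 (by omega)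
  refine ⟨p.conj (m - 1) - 1, ?_, ?_, by omega⟩
  · have h1 : m ≤ p.parts (p.conj (m - 1) - 1) := by
      have := lt_conj_iff_s7.1 (show p.conj (m-1) - 1 < p.conj (m-1) by omega)
      omega
    have h2 : p.parts (p.conj (m - 1) - 1) ≤ p.parts i := p.antitone (by omega)
    omega
  · show p.parts (p.conj (m - 1) - 1 + 1) < p.parts (p.conj (m - 1) - 1)
    have h1 : m ≤ p.parts (p.conj (m - 1) - 1) := by
      have := lt_conj_iff_s7.1 (show p.conj (m-1) - 1 < p.conj (m-1) by omega)
      omega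
    have h2 : ¬ (m ≤ p.parts (p.conj (m-1))) := by
      intro hco
      have : p.conj (m-1) < p.conj (m-1) := lt_conj_iff_s7.2 (by omega)
      omega
    have h3 : p.conj (m-1) - 1 + 1 = p.conj (m-1) := by omega
    rw [h3]; omega

lemma exists_addable_s7 {p : NPartition n} {m : ℕ} (h : m ∈ p.rows ∨ m = 0) :
    ∃ r, p.parts r = m ∧ p.IsAddableRow r ∧ r = p.conj m := by
  have hub : p.parts (p.conj m) ≤ m := by
    by_contra hco
    have : p.conj m < p.conj m := lt_conj_iff_s7.2 (by omega)
    omega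
  refine ⟨p.conj m, ?_, ?_, rfl⟩
  · rcases h with h | rfl
    · obtain ⟨⟨i, hi⟩, hm0⟩ := mem_rows_iff.1 h
      have hik : ¬ (i < p.conj m) := by
        intro hco
        have := lt_conj_iff_s7.1 hco
        omega
      have := p.antitone (show p.conj m ≤ i by omega)
      omega
    · omega
  · rcases Nat.eq_zero_or_pos (p.conj m) with h0 | h0
    · exact Or.inl h0
    · refine Or.inr ?_
      have := lt_conj_iff_s7.1 (show p.conj m - 1 < p.conj m by omega)
      omega

lemma ite_conj (v w : ℕ) (hv : 0 < v) :
    (if v = w - 1 ∧ 0 < w - 1 then (1:ℕ) else 0) = (if v = w - 1 then (1:ℕ) else 0) := by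
  rcases eq_or_ne v (w - 1) with h | h
  · rw [if_pos ⟨h, by omega⟩, if_pos h]
  · rw [if_neg (fun hc => h hc.1), if_neg h]

lemma transfer_core (a b1 b2 v x1 x2 y : ℕ) (hv : 0 < v)
    (hx1 : 0 < x1) (hx2 : 0 < x2) (h12 : x1 ≠ x2)
    (e1 : b1 = a - (if v = x1 then 1 else 0) - (if v = y then 1 else 0)
        + (if v = x1 - 1 then 1 else 0) + (if v = y + 1 then 1 else 0))
    (e2 : b2 = a - (if v = x2 then 1 else 0) - (if v = y then 1 else 0)
        + (if v = x2 - 1 then 1 else 0) + (if v = y + 1 then 1 else 0))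
    (f1 : (if v = x1 then 1 else 0) ≤ a)
    (f2 : (if v = x2 then 1 else 0) ≤ a)
    (f3 : (if v = y then 1 else 0) ≤ a)
    (f4 : (if v = x1 then (if v = y then 2 else 0) else 0) ≤ a)
    (f5 : (if v = x2 then (if v = y then 2 else 0) else 0) ≤ a)
    (g1 : (if v = x2 then 1 else 0) ≤ b1)
    (g2 : (if v = x1 - 1 then 1 else 0) ≤ b1)
    (g3 : (if v = x2 then (if v = x1 - 1 then 2 else 0) else 0) ≤ b1) :
    b2 = b1 - (if v = x2 then 1 else 0) - (if v = x1 - 1 then 1 else 0)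
        + (if v = x2 - 1 then 1 else 0) + (if v = x1 then 1 else 0) := by
  split_ifs at * <;> omega

end NPartition

set_option maxHeartbeats 1000000 in
/-- If `a` is an addable corner of `λ` and `c₁ ≠ c₂` are distinct
removable corners such that both transfers `μ₁ = λ(c₁ → a)` and `μ₂ = λ(c₂ → a)` are
admissible, then `μ₁` and `μ₂` are adjacent in `G_n`; consequently `λ, μ₁, μ₂` span a
triangle in `G_n`. -/
theorem top_triangle {n : ℕ} (f g₁ g₂ : NPartition n) (rc₁ rc₂ ra : ℕ)
    (h₁ : NPartition.IsTransfer f g₁ rc₁ ra)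
    (h₂ : NPartition.IsTransfer f g₂ rc₂ ra)
    (hc : rc₁ ≠ rc₂) :
    NPartition.Adj g₁ g₂ ∧
      g₁ ≠ g₂ ∧ NPartition.Adj f g₁ ∧ NPartition.Adj f g₂ := by
  obtain ⟨hrem₁, hadd, hne₁, hgf₁, hrows₁⟩ := h₁
  obtain ⟨hrem₂, -, hne₂, hgf₂, hrows₂⟩ := h₂
  have hrem₁' : f.parts (rc₁ + 1) < f.parts rc₁ := hrem₁
  have hrem₂' : f.parts (rc₂ + 1) < f.parts rc₂ := hrem₂
  have hx₁ : 0 < f.parts rc₁ := by omega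
  have hx₂ : 0 < f.parts rc₂ := by omega
  have hx12 : f.parts rc₁ ≠ f.parts rc₂ := by
    rcases lt_trichotomy rc₁ rc₂ with h | h | h
    · have h1 : f.parts rc₂ ≤ f.parts (rc₁ + 1) := f.antitone (by omega)
      omega
    · exact absurd h hc
    · have h1 : f.parts rc₁ ≤ f.parts (rc₂ + 1) := f.antitone (by omega)
      omega
  have I1 : ∀ v, Multiset.count v g₁.rows
      = Multiset.count v f.rows - (if v = f.parts rc₁ then 1 else 0)
        - (if v = f.parts ra then 1 else 0)
        + (if v = f.parts rc₁ - 1 ∧ 0 < f.parts rc₁ - 1 then 1 else 0)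
        + (if v = f.parts ra + 1 then 1 else 0) := by
    intro v; rw [hrows₁]; exact NPartition.count_transferRows f rc₁ ra v
  have I2 : ∀ v, Multiset.count v g₂.rows
      = Multiset.count v f.rows - (if v = f.parts rc₂ then 1 else 0)
        - (if v = f.parts ra then 1 else 0)
        + (if v = f.parts rc₂ - 1 ∧ 0 < f.parts rc₂ - 1 then 1 else 0)
        + (if v = f.parts ra + 1 then 1 else 0) := by
    intro v; rw [hrows₂]; exact NPartition.count_transferRows f rc₂ ra v
  have FA1 : 1 ≤ Multiset.count (f.parts rc₁) f.rows := NPartition.one_le_count_rows rc₁ hx₁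
  have FA2 : 1 ≤ Multiset.count (f.parts rc₂) f.rows := NPartition.one_le_count_rows rc₂ hx₂
  have FAy : 0 < f.parts ra → 1 ≤ Multiset.count (f.parts ra) f.rows :=
    fun h => NPartition.one_le_count_rows ra h
  have FAy1 : f.parts ra = f.parts rc₁ → 2 ≤ Multiset.count (f.parts rc₁) f.rows :=
    fun h => NPartition.two_le_count_rows hne₁ h.symm hx₁
  have FAy2 : f.parts ra = f.parts rc₂ → 2 ≤ Multiset.count (f.parts rc₂) f.rows :=
    fun h => NPartition.two_le_count_rows hne₂ h.symm hx₂
  have G1 : 1 ≤ Multiset.count (f.parts rc₂) g₁.rows := by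
    have e := I1 (f.parts rc₂)
    by_cases hy2 : f.parts ra = f.parts rc₂
    · have h2 := FAy2 hy2
      split_ifs at e <;> omega
    · split_ifs at e <;> omega
  have G2 : 1 < f.parts rc₁ →
      1 ≤ Multiset.count (f.parts rc₁ - 1) g₁.rows
        - (if f.parts rc₁ - 1 = f.parts rc₂ then 1 else 0) := by
    intro h1
    have e := I1 (f.parts rc₁ - 1)
    by_cases hy : f.parts ra = f.parts rc₁ - 1
    · have hAy := FAy (by omega)
      rw [hy] at hAy
      by_cases h2 : f.parts ra = f.parts rc₂
      · have hAy2 := FAy2 h2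
        rw [← h2, hy] at hAy2
        split_ifs at e <;> split_ifs <;> omega
      · split_ifs at e <;> split_ifs <;> omega
    · by_cases h2 : f.parts rc₁ - 1 = f.parts rc₂
      · have hA2 := FA2
        rw [← h2] at hA2
        split_ifs at e <;> split_ifs <;> omega
      · split_ifs at e <;> split_ifs <;> omega
  have hg12 : g₁ ≠ g₂ := by
    intro h
    have b1 : Multiset.count (f.parts rc₁) g₁.rows = Multiset.count (f.parts rc₁) g₂.rows := by
      rw [h]
    have b2 : Multiset.count (f.parts rc₂) g₁.rows = Multiset.count (f.parts rc₂) g₂.rows := by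
      rw [h]
    have e1 := I1 (f.parts rc₁); have e2 := I2 (f.parts rc₁)
    have e3 := I1 (f.parts rc₂); have e4 := I2 (f.parts rc₂)
    have t1 : f.parts rc₁ = f.parts rc₁ := rfl
    have t2 : f.parts rc₂ = f.parts rc₂ := rfl
    have nc1 : ¬(f.parts rc₁ = f.parts rc₁ - 1 ∧ 0 < f.parts rc₁ - 1) := by omega
    have nc2 : ¬(f.parts rc₂ = f.parts rc₂ - 1 ∧ 0 < f.parts rc₂ - 1) := by omega
    have n21 : ¬(f.parts rc₂ = f.parts rc₁) := fun hh => hx12 hh.symm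
    simp only [if_pos t1, if_pos t2, if_neg nc1, if_neg nc2, if_neg hx12, if_neg n21]
      at e1 e2 e3 e4
    by_cases hy1 : f.parts ra = f.parts rc₁
    · have := FAy1 hy1
      split_ifs at e1 e2 e3 e4 <;> omega
    · by_cases hy2 : f.parts ra = f.parts rc₂
      · have := FAy2 hy2
        split_ifs at e1 e2 e3 e4 <;> omega
      · split_ifs at e1 e2 e3 e4 <;> omega
  have hmem2 : f.parts rc₂ ∈ g₁.rows := Multiset.count_pos.1 (by omega)
  obtain ⟨rc', hrcv, hrcrem, hrcidx⟩ := NPartition.exists_removable_s7 hx₂ hmem2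
  obtain ⟨ra', hrav, hraadd, hraidx⟩ :=
    NPartition.exists_addable_s7 (p := g₁) (m := f.parts rc₁ - 1) (by
      by_cases h1 : 1 < f.parts rc₁
      · left
        refine Multiset.count_pos.1 ?_
        have := G2 h1
        split_ifs at this <;> omega
      · right; omega)
  have hdiff : rc' ≠ ra' := by
    by_cases hma : f.parts rc₁ - 1 = f.parts rc₂
    · have h1 : 1 < f.parts rc₁ := by omega
      have hcnt : 2 ≤ Multiset.count (f.parts rc₂) g₁.rows := by
        have := G2 h1
        rw [hma] at this
        split_ifs at this <;> omega
      have hconj := NPartition.conj_pred (p := g₁) (m := f.parts rc₂) hx₂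
      rw [hma] at hraidx
      omega
    · intro h
      rw [h, hrav] at hrcv
      exact hma hrcv
  have htrans : NPartition.IsTransfer g₁ g₂ rc' ra' := by
    refine ⟨hrcrem, hraadd, hdiff, hg12.symm, ?_⟩
    apply Multiset.ext.2
    intro v
    rw [NPartition.count_transferRows, hrcv, hrav,
      show f.parts rc₁ - 1 + 1 = f.parts rc₁ by omega]
    rcases Nat.eq_zero_or_pos v with rfl | hv
    · rw [NPartition.count_zero_rows, NPartition.count_zero_rows]
      split_ifs <;> omega
    · have e1 := I1 v; have e2 := I2 v
      rw [NPartition.ite_conj v (f.parts rc₁) hv] at e1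
      rw [NPartition.ite_conj v (f.parts rc₂) hv] at e2
      rw [NPartition.ite_conj v (f.parts rc₂) hv]
      refine NPartition.transfer_core (Multiset.count v f.rows) (Multiset.count v g₁.rows)
        (Multiset.count v g₂.rows) v (f.parts rc₁) (f.parts rc₂) (f.parts ra)
        hv hx₁ hx₂ hx12 e1 e2 ?_ ?_ ?_ ?_ ?_ ?_ ?_ ?_
      · split_ifs with h
        · rw [h]; exact FA1
        · exact Nat.zero_le _
      · split_ifs with h
        · rw [h]; exact FA2
        · exact Nat.zero_le _
      · split_ifs with h
        · rw [h]; exact FAy (by omega)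
        · exact Nat.zero_le _
      · split_ifs with h h'
        · rw [h]; exact FAy1 (by omega)
        · exact Nat.zero_le _
        · exact Nat.zero_le _
      · split_ifs with h h'
        · rw [h]; exact FAy2 (by omega)
        · exact Nat.zero_le _
        · exact Nat.zero_le _
      · split_ifs with h
        · rw [h]; exact G1
        · exact Nat.zero_le _
      · split_ifs with h
        · have h1 : 1 < f.parts rc₁ := by omega
          have hG := G2 h1
          rw [← h] at hG
          split_ifs at hG <;> omega
        · exact Nat.zero_le _
      · split_ifs with h h'
        · have h1 : 1 < f.parts rc₁ := by omega
          have hG := G2 h1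
          rw [if_pos (show f.parts rc₁ - 1 = f.parts rc₂ by omega)] at hG
          rw [← h'] at hG
          omega
        · exact Nat.zero_le _
        · exact Nat.zero_le _
  exact ⟨Or.inl ⟨rc', ra', htrans⟩, hg12,
    Or.inl ⟨rc₁, ra, hrem₁, hadd, hne₁, hgf₁, hrows₁⟩,
    Or.inl ⟨rc₂, ra, hrem₂, hadd, hne₂, hgf₂, hrows₂⟩⟩
end

section
/- Let λ be a partition of n and let μ_i = λ(c_i→a_i), i = 1,…,m, be distinct neighbors of λ such that {λ, μ₁, …, μ_m} is a clique in the partition graph G_n. Then either all removable corners c_i coincide, or all addable corners a_i coincide. -/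
open Finset

/-- A partition of `n`: a finitely supported weakly decreasing sequence of
row lengths (rows indexed from `0`) summing to `n`. -/
structure RowPartition (n : ℕ) where
  parts : ℕ →₀ ℕ
  antitone : ∀ ⦃i j : ℕ⦄, i ≤ j → parts j ≤ parts i
  total : parts.sum (fun _ m => m) = n

namespace RowPartition

variable {n : ℕ}

/-- The multiset of (positive) row lengths of a partition. -/
def rows (f : RowPartition n) : Multiset ℕ := f.parts.support.val.map f.parts

/-- `conj f j` is the number of rows of length at least `j + 1`; i.e. the length of
the `(j+1)`-st column (columns indexed from `0`), the conjugate partition `λ'`. -/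
def conj (f : RowPartition n) (j : ℕ) : ℕ :=
  (f.rows.filter (fun m => j + 1 ≤ m)).card

/-- The height `h(λ) = ∑ i · λ_i`, rows indexed from `1`. -/
def height (f : RowPartition n) : ℕ :=
  ∑ i ∈ f.parts.support, (i + 1) * f.parts i

/-- Row `r` (0-indexed) of `f` carries a removable corner: removing its last cell
again yields a partition. -/
def IsRemovableRow (f : RowPartition n) (r : ℕ) : Prop :=
  f.parts (r + 1) < f.parts r

/-- Row `r` (0-indexed) of `f` carries an addable corner: adding a cell at the end
of this row again yields a partition. -/
def IsAddableRow (f : RowPartition n) (r : ℕ) : Prop :=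
  r = 0 ∨ f.parts r < f.parts (r - 1)

/-- The multiset of rows obtained from `f` by removing one cell from the corner in
row `rc` and adding one cell at the corner in row `ra` (zero rows discarded);
reordering is built in since this is a multiset. -/
def transferRows (f : RowPartition n) (rc ra : ℕ) : Multiset ℕ :=
  ((f.rows.erase (f.parts rc)).erase (f.parts ra))
    + Multiset.filter (fun m => 0 < m) {f.parts rc - 1, f.parts ra + 1}

/-- `IsTransfer f g rc ra` : `g = λ(c → a)` is obtained from `f = λ` by the admissible
transfer of one cell from the removable corner `c` in row `rc` to the addable corner
`a` in row `ra ≠ rc`, followed by reordering, and `g ≠ f`. -/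
def IsTransfer (f g : RowPartition n) (rc ra : ℕ) : Prop :=
  f.IsRemovableRow rc ∧ f.IsAddableRow ra ∧ rc ≠ ra ∧ g ≠ f ∧
    g.rows = f.transferRows rc ra

/-- Adjacency in the partition graph `G_n`. -/
def Adj (f g : RowPartition n) : Prop :=
  (∃ rc ra, IsTransfer f g rc ra) ∨ (∃ rc ra, IsTransfer g f rc ra)

/-- The one-row partition `(n)`. -/
noncomputable def onerow (n : ℕ) : RowPartition n where
  parts := Finsupp.single 0 n
  antitone := by
    intro i j hij
    by_cases hi : i = 0
    · subst hi
      by_cases hj : j = 0 <;> simp [Finsupp.single_apply, eq_comm, hj]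
    · have hj : j ≠ 0 := by omega
      simp [Finsupp.single_apply, eq_comm, hi, hj]
  total := Finsupp.sum_single_index rfl

end RowPartition

namespace RowPartition
variable {n : ℕ}

def Nge (f : RowPartition n) (w : ℕ) : ℕ := Multiset.countP (fun m => w ≤ m) f.rows

lemma Nge_eq (f : RowPartition n) (s : ℕ) :
    f.Nge s = (f.parts.support.filter (fun i => s ≤ f.parts i)).card := by
  rw [Nge, rows, Multiset.countP_map, Finset.card, Finset.filter_val]

lemma Nge_iff (f : RowPartition n) (r s : ℕ) (hs : 1 ≤ s) :
    s ≤ f.parts r ↔ r + 1 ≤ f.Nge s := by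
  rw [Nge_eq]
  constructor
  · intro h
    have hsub : Finset.range (r+1) ⊆ f.parts.support.filter (fun i => s ≤ f.parts i) := by
      intro i hi
      simp only [Finset.mem_range] at hi
      have hle : s ≤ f.parts i := le_trans h (f.antitone (by omega))
      simp only [Finset.mem_filter, Finsupp.mem_support_iff]
      exact ⟨by omega, hle⟩
    have := Finset.card_le_card hsub
    simpa using this
  · intro h
    by_contra hlt
    push_neg at hlt
    have hsub : f.parts.support.filter (fun i => s ≤ f.parts i) ⊆ Finset.range r := by
      intro i hi
      simp only [Finset.mem_filter] at hi
      simp only [Finset.mem_range]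
      by_contra hir
      push_neg at hir
      have := f.antitone hir
      omega
    have := Finset.card_le_card hsub
    simp only [Finset.card_range] at this
    omega

lemma ext' {f g : RowPartition n} (h : f.parts = g.parts) : f = g := by
  cases f; cases g; cases h; rfl

lemma eq_of_Nge {f g : RowPartition n} (h : ∀ w, 1 ≤ w → f.Nge w = g.Nge w) : f = g := by
  apply ext'
  apply Finsupp.ext
  intro r
  have h1 : ∀ s, 1 ≤ s → (s ≤ f.parts r ↔ s ≤ g.parts r) := by
    intro s hs; rw [Nge_iff f r s hs, Nge_iff g r s hs, h s hs]
  by_contra hne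
  rcases Nat.lt_or_ge (f.parts r) (g.parts r) with hlt | hge
  · have := (h1 (g.parts r) (by omega)).mpr le_rfl; omega
  · have hlt : g.parts r < f.parts r := by omega
    have := (h1 (f.parts r) (by omega)).mp le_rfl; omega

lemma mem_rows {f : RowPartition n} {r : ℕ} (h : 0 < f.parts r) : f.parts r ∈ f.rows := by
  rw [rows]
  refine Multiset.mem_map.mpr ⟨r, ?_, rfl⟩
  simpa [Finsupp.mem_support_iff] using h.ne'

lemma zero_not_mem_rows (f : RowPartition n) : (0:ℕ) ∉ f.rows := by
  rw [rows]
  intro hmem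
  obtain ⟨a, ha, ha0⟩ := Multiset.mem_map.mp hmem
  rw [Finset.mem_val, Finsupp.mem_support_iff] at ha
  exact ha ha0

lemma mem_erase_rows {f : RowPartition n} {rc ra : ℕ} (hne : rc ≠ ra)
    (h1 : 0 < f.parts rc) (h2 : 0 < f.parts ra) :
    f.parts ra ∈ f.rows.erase (f.parts rc) := by
  by_cases hv : f.parts ra = f.parts rc
  · have hcount : 2 ≤ Multiset.count (f.parts rc) f.rows := by
      rw [rows, Multiset.count_map]
      have hsub : ({rc, ra} : Finset ℕ) ⊆ f.parts.support.filter (fun a => f.parts rc = f.parts a) := by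
        intro i hi
        simp only [Finset.mem_insert, Finset.mem_singleton] at hi
        simp only [Finset.mem_filter, Finsupp.mem_support_iff]
        rcases hi with h | h <;> subst h
        · exact ⟨h1.ne', rfl⟩
        · exact ⟨h2.ne', hv.symm⟩
      have hc2 : 2 ≤ ({rc, ra} : Finset ℕ).card := by
        rw [Finset.card_insert_of_notMem (by simpa using hne), Finset.card_singleton]
      have := Finset.card_le_card hsub
      exact hc2.trans this
    rw [hv]
    apply Multiset.count_pos.mp
    rw [Multiset.count_erase_self]
    omega
  · rw [Multiset.mem_erase_of_ne hv]
    exact mem_rows h2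

lemma transfer_count {f g : RowPartition n} {rc ra : ℕ}
    (hrem : f.IsRemovableRow rc) (hne : rc ≠ ra)
    (hrows : g.rows = f.transferRows rc ra) :
    ∀ w, 1 ≤ w → g.Nge w + (if w = f.parts rc then 1 else 0)
      = f.Nge w + (if w = f.parts ra + 1 then 1 else 0) := by
  intro w hw
  have hx1 : 1 ≤ f.parts rc := by
    have := hrem; rw [IsRemovableRow] at this; omega
  have hxR : f.parts rc ∈ f.rows := mem_rows (by omega)
  rw [Nge, Nge, hrows, transferRows, Multiset.countP_add]
  have h2 : Multiset.countP (fun m => w ≤ m)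
      (Multiset.filter (fun m => 0 < m) {f.parts rc - 1, f.parts ra + 1})
      = (if w ≤ f.parts rc - 1 ∧ 0 < f.parts rc - 1 then 1 else 0)
        + (if w ≤ f.parts ra + 1 ∧ 0 < f.parts ra + 1 then 1 else 0) := by
    rw [Multiset.countP_filter]
    rw [show ({f.parts rc - 1, f.parts ra + 1} : Multiset ℕ)
        = (f.parts rc - 1) ::ₘ (f.parts ra + 1) ::ₘ 0 from rfl]
    simp only [Multiset.countP_cons, Multiset.countP_zero, zero_add]
    split_ifs <;> omega
  rw [h2]
  have e1 : Multiset.countP (fun m => w ≤ m) f.rows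
      = Multiset.countP (fun m => w ≤ m) (f.rows.erase (f.parts rc))
        + (if w ≤ f.parts rc then 1 else 0) := by
    conv_lhs => rw [← Multiset.cons_erase hxR]
    rw [Multiset.countP_cons]
  by_cases hy : 0 < f.parts ra
  · have hyR : f.parts ra ∈ f.rows.erase (f.parts rc) := mem_erase_rows hne (by omega) hy
    have e2 : Multiset.countP (fun m => w ≤ m) (f.rows.erase (f.parts rc))
        = Multiset.countP (fun m => w ≤ m) ((f.rows.erase (f.parts rc)).erase (f.parts ra))
          + (if w ≤ f.parts ra then 1 else 0) := by
      conv_lhs => rw [← Multiset.cons_erase hyR]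
      rw [Multiset.countP_cons]
    rw [e1, e2]
    split_ifs <;> omega
  · have hy0 : f.parts ra = 0 := by omega
    have e3 : (f.rows.erase (f.parts rc)).erase (f.parts ra) = f.rows.erase (f.parts rc) := by
      apply Multiset.erase_of_notMem
      rw [hy0]
      intro hmem
      exact zero_not_mem_rows f (Multiset.mem_of_mem_erase hmem)
    rw [e3, e1]
    split_ifs <;> omega

lemma core (x₁ y₁ x₂ y₂ u v : ℕ) (hx₁ : 1 ≤ x₁)
    (h1 : x₁ ≠ y₁ + 1) (h2 : x₂ ≠ y₂ + 1)
    (hx : x₁ ≠ x₂) (hy : y₁ ≠ y₂)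
    (heq : ∀ w : ℕ, 1 ≤ w →
      (if w = y₂+1 then 1 else 0) + (if w = x₁ then 1 else 0) + (if w = u then 1 else 0)
      = (if w = y₁+1 then 1 else 0) + (if w = x₂ then 1 else 0) + (if w = v+1 then 1 else 0)) :
    False := by
  have e1 := heq x₁ hx₁
  have e2 := heq (y₂+1) (by omega)
  rw [if_pos (rfl : x₁ = x₁), if_neg h1, if_neg hx] at e1
  have k1 : x₁ = v + 1 := by split_ifs at e1 <;> omega
  have k2 : x₁ ≠ y₂ + 1 := by split_ifs at e1 <;> omega
  rw [if_pos (rfl : y₂+1 = y₂+1), if_neg (show ¬(y₂+1 = x₁) by omega),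
    if_neg (show ¬(y₂+1 = y₁+1) by omega),
    if_neg (show ¬(y₂+1 = x₂) from fun h => h2 h.symm),
    if_neg (show ¬(y₂+1 = v+1) by omega)] at e2
  split_ifs at e2 <;> omega

lemma removable_unique {f : RowPartition n} {r s : ℕ} (hr : f.IsRemovableRow r)
    (hs : f.IsRemovableRow s) (h : f.parts r = f.parts s) : r = s := by
  rw [IsRemovableRow] at hr hs
  by_contra hne
  rcases Nat.lt_or_ge r s with hlt | hge
  · have := f.antitone (show r + 1 ≤ s by omega); omega
  · have := f.antitone (show s + 1 ≤ r by omega); omega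

lemma addable_unique {f : RowPartition n} {r s : ℕ} (hr : f.IsAddableRow r)
    (hs : f.IsAddableRow s) (h : f.parts r = f.parts s) : r = s := by
  rw [IsAddableRow] at hr hs
  by_contra hne
  rcases Nat.lt_or_ge r s with hlt | hge
  · rcases hs with h0 | hlt2
    · omega
    · have := f.antitone (show r ≤ s - 1 by omega); omega
  · rcases hr with h0 | hlt2
    · omega
    · have := f.antitone (show s ≤ r - 1 by omega); omega

lemma pairwise_core {f A B : RowPartition n} {rc₁ ra₁ rc₂ ra₂ : ℕ}
    (h1 : RowPartition.IsTransfer f A rc₁ ra₁) (h2 : RowPartition.IsTransfer f B rc₂ ra₂)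
    (hAB : ∃ rc' ra', RowPartition.IsTransfer A B rc' ra')
    (hx : f.parts rc₁ ≠ f.parts rc₂) (hy : f.parts ra₁ ≠ f.parts ra₂) : False := by
  obtain ⟨hrem1, hadd1, hne1, hne1', hrows1⟩ := h1
  obtain ⟨hrem2, hadd2, hne2, hne2', hrows2⟩ := h2
  obtain ⟨rc', ra', hrem3, hadd3, hne3, hne3', hrows3⟩ := hAB
  have E1 := transfer_count hrem1 hne1 hrows1
  have E2 := transfer_count hrem2 hne2 hrows2
  have E3 := transfer_count hrem3 hne3 hrows3
  have hxy1 : f.parts rc₁ ≠ f.parts ra₁ + 1 := by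
    intro hcontra
    apply hne1'
    apply eq_of_Nge
    intro w hw
    have := E1 w hw; rw [← hcontra] at this; omega
  have hxy2 : f.parts rc₂ ≠ f.parts ra₂ + 1 := by
    intro hcontra
    apply hne2'
    apply eq_of_Nge
    intro w hw
    have := E2 w hw; rw [← hcontra] at this; omega
  apply core (f.parts rc₁) (f.parts ra₁) (f.parts rc₂) (f.parts ra₂)
    (A.parts rc') (A.parts ra')
    (by have := hrem1; rw [IsRemovableRow] at this; omega) hxy1 hxy2 hx hy
  intro w hw
  have e1 := E1 w hw
  have e2 := E2 w hw
  have e3 := E3 w hw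
  split_ifs at e1 e2 e3 ⊢ <;> omega


end RowPartition

/-- If `μ_i = λ(c_i → a_i)`, `i = 1, …, m`, are distinct neighbors of
`λ` such that `{λ, μ₁, …, μ_m}` is a clique in `G_n`, then either all the removable
corners `c_i` coincide, or all the addable corners `a_i` coincide. -/
theorem clique_uniform_type {n : ℕ} (f : RowPartition n) (m : ℕ)
    (μ : Fin m → RowPartition n) (rc ra : Fin m → ℕ)
    (ht : ∀ i, RowPartition.IsTransfer f (μ i) (rc i) (ra i))
    (hinj : Function.Injective μ)
    (hclique : ∀ i j, i ≠ j → RowPartition.Adj (μ i) (μ j)) :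
    (∀ i j, rc i = rc j) ∨ (∀ i j, ra i = ra j) := by
  by_contra hcon
  push_neg at hcon
  have hpair : ∀ i j : Fin m, rc i = rc j ∨ ra i = ra j := by
    intro i j
    by_cases hij : i = j
    · left; rw [hij]
    by_cases hxv : f.parts (rc i) = f.parts (rc j)
    · left; exact RowPartition.removable_unique (ht i).1 (ht j).1 hxv
    by_cases hyv : f.parts (ra i) = f.parts (ra j)
    · right; exact RowPartition.addable_unique (ht i).2.1 (ht j).2.1 hyv
    · exfalso
      rcases hclique i j hij with hAB | hBA
      · exact RowPartition.pairwise_core (ht i) (ht j) hAB hxv hyv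
      · exact RowPartition.pairwise_core (ht j) (ht i) hBA (Ne.symm hxv) (Ne.symm hyv)
  obtain ⟨h1, h2⟩ := hcon
  obtain ⟨i₀, j₀, hij₀⟩ := h1
  have hra0 : ra i₀ = ra j₀ := (hpair i₀ j₀).resolve_left hij₀
  obtain ⟨k₀, l₀, hkl⟩ := h2
  have key : ∀ k, ra k = ra i₀ := by
    intro k
    by_cases hk : rc k = rc i₀
    · have hk2 : rc k ≠ rc j₀ := by rw [hk]; exact hij₀
      have := (hpair k j₀).resolve_left hk2
      rw [this]; exact hra0.symm
    · exact (hpair k i₀).resolve_left hk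
  exact hkl (by rw [key k₀, key l₀])
end

section
/- Every clique in the partition graph G_n containing a fixed vertex λ is contained in a star-simplex {λ} ∪ {λ(c→a) : a ∈ A} for a single removable corner c, or in a top-simplex {λ} ∪ {λ(c→a) : c ∈ C} for a single addable corner a. -/
open Finset

/-- A partition of `n`: a finitely supported weakly decreasing sequence of
row lengths (rows indexed from `0`) summing to `n`. -/
structure IntPartition (n : ℕ) where
  parts : ℕ →₀ ℕ
  antitone : ∀ ⦃i j : ℕ⦄, i ≤ j → parts j ≤ parts i
  total : parts.sum (fun _ m => m) = n

namespace IntPartition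

variable {n : ℕ}

/-- The multiset of (positive) row lengths of a partition. -/
def rows (f : IntPartition n) : Multiset ℕ := f.parts.support.val.map f.parts

/-- `conj f j` is the number of rows of length at least `j + 1`; i.e. the length of
the `(j+1)`-st column (columns indexed from `0`), the conjugate partition `λ'`. -/
def conj (f : IntPartition n) (j : ℕ) : ℕ :=
  (f.rows.filter (fun m => j + 1 ≤ m)).card

/-- The height `h(λ) = ∑ i · λ_i`, rows indexed from `1`. -/
def height (f : IntPartition n) : ℕ :=
  ∑ i ∈ f.parts.support, (i + 1) * f.parts i

/-- Row `r` (0-indexed) of `f` carries a removable corner: removing its last cell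
again yields a partition. -/
def IsRemovableRow (f : IntPartition n) (r : ℕ) : Prop :=
  f.parts (r + 1) < f.parts r

/-- Row `r` (0-indexed) of `f` carries an addable corner: adding a cell at the end
of this row again yields a partition. -/
def IsAddableRow (f : IntPartition n) (r : ℕ) : Prop :=
  r = 0 ∨ f.parts r < f.parts (r - 1)

/-- The multiset of rows obtained from `f` by removing one cell from the corner in
row `rc` and adding one cell at the corner in row `ra` (zero rows discarded);
reordering is built in since this is a multiset. -/
def transferRows (f : IntPartition n) (rc ra : ℕ) : Multiset ℕ :=
  ((f.rows.erase (f.parts rc)).erase (f.parts ra))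
    + Multiset.filter (fun m => 0 < m) {f.parts rc - 1, f.parts ra + 1}

/-- `IsTransfer f g rc ra` : `g = λ(c → a)` is obtained from `f = λ` by the admissible
transfer of one cell from the removable corner `c` in row `rc` to the addable corner
`a` in row `ra ≠ rc`, followed by reordering, and `g ≠ f`. -/
def IsTransfer (f g : IntPartition n) (rc ra : ℕ) : Prop :=
  f.IsRemovableRow rc ∧ f.IsAddableRow ra ∧ rc ≠ ra ∧ g ≠ f ∧
    g.rows = f.transferRows rc ra

/-- Adjacency in the partition graph `G_n`. -/
def Adj (f g : IntPartition n) : Prop :=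
  (∃ rc ra, IsTransfer f g rc ra) ∨ (∃ rc ra, IsTransfer g f rc ra)

/-- The one-row partition `(n)`. -/
noncomputable def onerow (n : ℕ) : IntPartition n where
  parts := Finsupp.single 0 n
  antitone := by
    intro i j hij
    by_cases hi : i = 0
    · subst hi
      by_cases hj : j = 0 <;> simp [Finsupp.single_apply, eq_comm, hj]
    · have hj : j ≠ 0 := by omega
      simp [Finsupp.single_apply, eq_comm, hi, hj]
  total := Finsupp.sum_single_index rfl


/-- The number of rows of `f` of length at least `v` (auxiliary). -/
def cntGe (f : IntPartition n) (v : ℕ) : ℕ :=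
  ((Finset.range n).filter (fun r => v ≤ f.parts r)).card

/-- The number of entries of a multiset that are at least `v` (auxiliary). -/
def cntR (M : Multiset ℕ) (v : ℕ) : ℕ := Multiset.countP (fun m => v ≤ m) M

/-- Recovering the parts function from a multiset of rows (auxiliary). -/
def recoverP (n : ℕ) (M : Multiset ℕ) (r : ℕ) : ℕ :=
  ((Finset.range (n+1)).filter (fun j => r < cntR M (j+1))).card

lemma mem_support_lt (f : IntPartition n) {r : ℕ} (h : r ∈ f.parts.support) : r < n := by
  have hsub : Finset.range (r+1) ⊆ f.parts.support := by
    intro i hi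
    simp only [Finset.mem_range] at hi
    simp only [Finsupp.mem_support_iff] at h ⊢
    have := f.antitone (show i ≤ r by omega)
    omega
  have h1 : r + 1 ≤ f.parts.support.card := by
    simpa using Finset.card_le_card hsub
  have h2 : f.parts.support.card ≤ f.parts.sum (fun _ m => m) := by
    rw [Finsupp.sum, Finset.card_eq_sum_ones]
    apply Finset.sum_le_sum
    intro i hi
    simp only [Finsupp.mem_support_iff] at hi
    omega
  have := f.total
  omega

lemma parts_le (f : IntPartition n) (r : ℕ) : f.parts r ≤ n := by
  by_cases h : f.parts r = 0
  · omega
  · have hr : r ∈ f.parts.support := Finsupp.mem_support_iff.mpr h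
    have h1 : f.parts r ≤ f.parts.sum (fun _ m => m) := by
      rw [Finsupp.sum]
      exact Finset.single_le_sum (f := fun i => f.parts i) (fun i _ => Nat.zero_le _) hr
    rw [f.total] at h1
    exact h1

lemma zero_notin_rows (f : IntPartition n) : (0:ℕ) ∉ f.rows := by
  intro h
  rw [rows, Multiset.mem_map] at h
  obtain ⟨r, hr, hr0⟩ := h
  rw [Finset.mem_val, Finsupp.mem_support_iff] at hr
  exact hr hr0

lemma lt_cntGe_iff (f : IntPartition n) {v : ℕ} (hv : 1 ≤ v) (r : ℕ) :
    r < cntGe f v ↔ v ≤ f.parts r := by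
  constructor
  · intro h
    by_contra hc
    have hsub : (Finset.range n).filter (fun r => v ≤ f.parts r) ⊆ Finset.range r := by
      intro i hi
      simp only [Finset.mem_filter, Finset.mem_range] at hi ⊢
      by_contra hir
      have := f.antitone (show r ≤ i by omega)
      omega
    have := Finset.card_le_card hsub
    simp only [Finset.card_range] at this
    rw [cntGe] at h
    omega
  · intro h
    have hrs : r ∈ f.parts.support := by
      rw [Finsupp.mem_support_iff]; omega
    have hrn := mem_support_lt f hrs
    have hsub : Finset.range (r+1) ⊆ (Finset.range n).filter (fun r => v ≤ f.parts r) := by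
      intro i hi
      simp only [Finset.mem_range] at hi
      simp only [Finset.mem_filter, Finset.mem_range]
      have := f.antitone (show i ≤ r by omega)
      omega
    have := Finset.card_le_card hsub
    simp only [Finset.card_range] at this
    rw [cntGe]
    omega

lemma cntR_rows (f : IntPartition n) {j : ℕ} (hj : 1 ≤ j) : cntR f.rows j = cntGe f j := by
  rw [cntR, rows, Multiset.countP_map, cntGe]
  have : f.parts.support.filter (fun r => j ≤ f.parts r)
      = (Finset.range n).filter (fun r => j ≤ f.parts r) := by
    ext r
    simp only [Finset.mem_filter, Finsupp.mem_support_iff, Finset.mem_range]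
    constructor
    · rintro ⟨h1, h2⟩
      exact ⟨mem_support_lt f (Finsupp.mem_support_iff.mpr h1), h2⟩
    · rintro ⟨h1, h2⟩
      exact ⟨by omega, h2⟩
  rw [← this]
  rfl

lemma cntR_count (M : Multiset ℕ) (k : ℕ) : cntR M k = cntR M (k+1) + M.count k := by
  rw [cntR, cntR]
  induction M using Multiset.induction with
  | empty => simp
  | cons a s ih =>
    simp only [Multiset.countP_cons, Multiset.count_cons, ih]
    split_ifs <;> omega

lemma recoverP_rows (f : IntPartition n) (r : ℕ) : recoverP n f.rows r = f.parts r := by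
  rw [recoverP]
  have hfil : (Finset.range (n+1)).filter (fun j => r < cntR f.rows (j+1))
      = Finset.range (f.parts r) := by
    ext j
    simp only [Finset.mem_filter, Finset.mem_range]
    rw [cntR_rows f (by omega : 1 ≤ j+1)]
    have h4 := lt_cntGe_iff f (by omega : 1 ≤ j+1) r
    have hb := parts_le f r
    omega
  rw [hfil, Finset.card_range]

lemma parts_ext {f g : IntPartition n} (h : f.parts = g.parts) : f = g := by
  cases f; cases g
  simp only at h
  subst h
  rfl

lemma rows_inj {f g : IntPartition n} (h : f.rows = g.rows) : f = g := by
  apply parts_ext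
  ext r
  rw [← recoverP_rows f r, ← recoverP_rows g r, h]

lemma removable_one_le {f : IntPartition n} {rc : ℕ} (h : f.IsRemovableRow rc) :
    1 ≤ f.parts rc := by rw [IsRemovableRow] at h; omega

lemma removable_eq {f : IntPartition n} {rc : ℕ} (h : f.IsRemovableRow rc) :
    rc + 1 = cntGe f (f.parts rc) := by
  have hv := removable_one_le h
  have h1 := (lt_cntGe_iff f hv rc).mpr le_rfl
  have h2 := lt_cntGe_iff f hv (rc+1)
  rw [IsRemovableRow] at h
  omega

lemma addable_eq {f : IntPartition n} {ra : ℕ} (h : f.IsAddableRow ra) :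
    ra = cntGe f (f.parts ra + 1) := by
  have h1 := lt_cntGe_iff f (by omega : 1 ≤ f.parts ra + 1) ra
  rcases h with h | h
  · subst h
    have h2 := lt_cntGe_iff f (by omega : 1 ≤ f.parts 0 + 1) 0
    omega
  · rcases Nat.eq_zero_or_pos ra with rfl | hpos
    · simp at h
    · have h2 := lt_cntGe_iff f (by omega : 1 ≤ f.parts ra + 1) (ra - 1)
      omega

lemma mem_rows {f : IntPartition n} {r : ℕ} (h : 1 ≤ f.parts r) : f.parts r ∈ f.rows := by
  rw [rows, Multiset.mem_map]
  exact ⟨r, by rw [Finset.mem_val, Finsupp.mem_support_iff]; omega, rfl⟩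

lemma countP_erase_le (M : Multiset ℕ) (j : ℕ) {a : ℕ} (h : a ∈ M) :
    Multiset.countP (fun m => j ≤ m) (M.erase a) + (if j ≤ a then 1 else 0)
      = Multiset.countP (fun m => j ≤ m) M := by
  conv_rhs => rw [← Multiset.cons_erase h]
  rw [Multiset.countP_cons]

lemma count_rows_two_le {f : IntPartition n} {rc ra : ℕ} (hne : rc ≠ ra)
    (hv : 1 ≤ f.parts rc) (heq : f.parts rc = f.parts ra) :
    2 ≤ f.rows.count (f.parts rc) := by
  have h1 := (lt_cntGe_iff f hv rc).mpr le_rfl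
  have h2 := (lt_cntGe_iff f hv ra).mpr (by omega)
  have h3 := lt_cntGe_iff f (by omega : 1 ≤ f.parts rc + 1) rc
  have h4 := lt_cntGe_iff f (by omega : 1 ≤ f.parts rc + 1) ra
  have h5 := cntR_count f.rows (f.parts rc)
  have h6 := cntR_rows f (show 1 ≤ f.parts rc by omega)
  have h7 := cntR_rows f (show 1 ≤ f.parts rc + 1 by omega)
  omega

lemma cntR_transferRows (f : IntPartition n) {rc ra : ℕ} (hrm : f.IsRemovableRow rc)
    (had : f.IsAddableRow ra) (hne : rc ≠ ra) {j : ℕ} (hj : 1 ≤ j) :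
    (cntR (f.transferRows rc ra) j : ℤ)
      = cntGe f j - (if j = f.parts rc then 1 else 0) + (if j = f.parts ra + 1 then 1 else 0) := by
  have hv : 1 ≤ f.parts rc := removable_one_le hrm
  have hvM : f.parts rc ∈ f.rows := mem_rows hv
  have hwM : 1 ≤ f.parts ra → f.parts ra ∈ (f.rows.erase (f.parts rc)) := by
    intro hw1
    rcases eq_or_ne (f.parts ra) (f.parts rc) with hwv | hwv
    · rw [hwv]
      have h2 : 2 ≤ f.rows.count (f.parts rc) := count_rows_two_le hne hv (by omega)
      have h3 := Multiset.count_erase_self (f.parts rc) f.rows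
      rw [← Multiset.count_pos]
      omega
    · exact (Multiset.mem_erase_of_ne hwv).mpr (mem_rows hw1)
  have key1 := countP_erase_le f.rows j hvM
  have key3 : Multiset.countP (fun m => j ≤ m) ((f.rows.erase (f.parts rc)).erase (f.parts ra))
      + (if 1 ≤ f.parts ra then (if j ≤ f.parts ra then 1 else 0) else 0)
      = Multiset.countP (fun m => j ≤ m) (f.rows.erase (f.parts rc)) := by
    rcases Nat.lt_or_ge (f.parts ra) 1 with hw0 | hw1
    · have hnm : f.parts ra ∉ f.rows.erase (f.parts rc) := by
        intro hmem
        have h0 : f.parts ra = 0 := by omega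
        exact zero_notin_rows f (by rw [← h0]; exact Multiset.mem_of_mem_erase hmem)
      rw [Multiset.erase_of_notMem hnm]
      simp [show ¬ (1 ≤ f.parts ra) by omega]
    · have := countP_erase_le (f.rows.erase (f.parts rc)) j (hwM hw1)
      rw [if_pos hw1]
      exact this
  have key4 : Multiset.countP (fun m => j ≤ m)
      (Multiset.filter (fun m => 0 < m) ({f.parts rc - 1, f.parts ra + 1} : Multiset ℕ))
      = (if j ≤ f.parts rc - 1 then 1 else 0) + (if j ≤ f.parts ra + 1 then 1 else 0) := by
    have e1 : ({f.parts rc - 1, f.parts ra + 1} : Multiset ℕ)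
        = (f.parts rc - 1) ::ₘ ((f.parts ra + 1) ::ₘ (0 : Multiset ℕ)) := rfl
    rw [e1]
    rcases Nat.lt_or_ge 0 (f.parts rc - 1) with hv1 | hv1
    · rw [Multiset.filter_cons_of_pos _ (by simpa using hv1),
        Multiset.filter_cons_of_pos _ (by simp)]
      simp only [Multiset.countP_cons, Multiset.filter_zero, Multiset.countP_zero]
      omega
    · rw [Multiset.filter_cons_of_neg _ (by omega),
        Multiset.filter_cons_of_pos _ (by simp)]
      simp only [Multiset.countP_cons, Multiset.filter_zero, Multiset.countP_zero]
      have hnle : ¬ (j ≤ f.parts rc - 1) := by omega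
      simp [hnle]
  have key0 : Multiset.countP (fun m => j ≤ m) f.rows = cntGe f j := cntR_rows f hj
  simp only [cntR, transferRows, Multiset.countP_add]
  rw [key4]
  split_ifs at key1 key3 ⊢ <;> omega

lemma order_lt {f : IntPartition n} {rc ra : ℕ} (hrm : f.IsRemovableRow rc)
    (hvw : f.parts rc ≠ f.parts ra + 1) (h : rc < ra) : f.parts ra + 1 < f.parts rc := by
  have h1 := f.antitone (show rc + 1 ≤ ra by omega)
  rw [IsRemovableRow] at hrm
  omega

lemma recover_card {M : Multiset ℕ} {r T : ℕ}
    (hT : ∀ j, (j < n+1 ∧ r < cntR M (j+1)) ↔ j < T) : recoverP n M r = T := by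
  rw [recoverP]
  have hfil : (Finset.range (n+1)).filter (fun j => r < cntR M (j+1)) = Finset.range T := by
    ext j
    simp only [Finset.mem_filter, Finset.mem_range]
    exact hT j
  rw [hfil, Finset.card_range]

lemma recoverP_transferRows (f : IntPartition n) {rc ra : ℕ} (hrm : f.IsRemovableRow rc)
    (had : f.IsAddableRow ra) (hne : rc ≠ ra) (hvw : f.parts rc ≠ f.parts ra + 1) (r : ℕ) :
    recoverP n (f.transferRows rc ra) r
      = if r = rc then f.parts rc - 1 else if r = ra then f.parts ra + 1 else f.parts r := by
  have hv : 1 ≤ f.parts rc := removable_one_le hrm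
  have hrceq := removable_eq hrm
  have hraeq := addable_eq had
  have ho1 : rc < ra → f.parts ra + 1 < f.parts rc := order_lt hrm hvw
  have ho2 : ra < rc → f.parts rc ≤ f.parts ra := fun h => f.antitone (by omega)
  have hbc := parts_le f rc
  have hba := parts_le f ra
  rcases eq_or_ne r rc with rfl | hrc
  · rw [if_pos rfl]
    apply recover_card
    intro j
    have hc := cntR_transferRows f hrm had hne (show 1 ≤ j + 1 by omega)
    have hcongr1 : j + 1 = f.parts r → cntGe f (j+1) = cntGe f (f.parts r) :=
      fun h => by rw [h]
    have hcongr2 : j + 1 = f.parts ra + 1 → cntGe f (j+1) = cntGe f (f.parts ra + 1) :=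
      fun h => by rw [h]
    have hlt := lt_cntGe_iff f (show 1 ≤ j + 1 by omega) r
    omega
  · rcases eq_or_ne r ra with rfl | hra
    · rw [if_neg hrc, if_pos rfl]
      apply recover_card
      intro j
      have hc := cntR_transferRows f hrm had hne (show 1 ≤ j + 1 by omega)
      have hcongr1 : j + 1 = f.parts rc → cntGe f (j+1) = cntGe f (f.parts rc) :=
        fun h => by rw [h]
      have hcongr2 : j + 1 = f.parts r + 1 → cntGe f (j+1) = cntGe f (f.parts r + 1) :=
        fun h => by rw [h]
      have hlt := lt_cntGe_iff f (show 1 ≤ j + 1 by omega) r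
      omega
    · rw [if_neg hrc, if_neg hra]
      apply recover_card
      intro j
      have hc := cntR_transferRows f hrm had hne (show 1 ≤ j + 1 by omega)
      have hcongr1 : j + 1 = f.parts rc → cntGe f (j+1) = cntGe f (f.parts rc) :=
        fun h => by rw [h]
      have hcongr2 : j + 1 = f.parts ra + 1 → cntGe f (j+1) = cntGe f (f.parts ra + 1) :=
        fun h => by rw [h]
      have hlt := lt_cntGe_iff f (show 1 ≤ j + 1 by omega) r
      have hltv := lt_cntGe_iff f hv r
      have hltw1 := lt_cntGe_iff f (show 1 ≤ f.parts ra + 1 by omega) r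
      have hbr := parts_le f r
      omega

lemma recoverP_transferRows_eq (f : IntPartition n) {rc ra : ℕ} (hrm : f.IsRemovableRow rc)
    (had : f.IsAddableRow ra) (hne : rc ≠ ra) (hvw : f.parts rc = f.parts ra + 1) (r : ℕ) :
    recoverP n (f.transferRows rc ra) r = f.parts r := by
  have hv : 1 ≤ f.parts rc := removable_one_le hrm
  have hbr := parts_le f r
  apply recover_card
  intro j
  have hc := cntR_transferRows f hrm had hne (show 1 ≤ j + 1 by omega)
  have hlt := lt_cntGe_iff f (show 1 ≤ j + 1 by omega) r
  omega

lemma transfer_parts {f g : IntPartition n} {rc ra : ℕ} (h : IsTransfer f g rc ra) :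
    f.parts rc ≠ f.parts ra + 1 ∧ g.parts rc = f.parts rc - 1 ∧ g.parts ra = f.parts ra + 1
      ∧ ∀ r, r ≠ rc → r ≠ ra → g.parts r = f.parts r := by
  obtain ⟨hrm, had, hne, hgf, hrows⟩ := h
  have hvw : f.parts rc ≠ f.parts ra + 1 := by
    intro hvw
    apply hgf
    apply parts_ext
    ext r
    rw [← recoverP_rows g r, hrows, recoverP_transferRows_eq f hrm had hne hvw r]
  have key : ∀ r, g.parts r
      = if r = rc then f.parts rc - 1 else if r = ra then f.parts ra + 1 else f.parts r := by
    intro r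
    rw [← recoverP_rows g r, hrows, recoverP_transferRows f hrm had hne hvw r]
  refine ⟨hvw, ?_, ?_, fun r h1 h2 => ?_⟩
  · rw [key rc, if_pos rfl]
  · rw [key ra, if_neg (Ne.symm hne), if_pos rfl]
  · rw [key r, if_neg h1, if_neg h2]

lemma cntGe_update {X Y : IntPartition n} {a b : ℕ} (hab : a ≠ b) (hv : 1 ≤ X.parts a)
    (hvw : X.parts a ≠ X.parts b + 1)
    (h1 : Y.parts a = X.parts a - 1) (h2 : Y.parts b = X.parts b + 1)
    (h3 : ∀ r, r ≠ a → r ≠ b → Y.parts r = X.parts r) {j : ℕ} (hj : 1 ≤ j) :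
    (cntGe Y j : ℤ) = cntGe X j - (if j = X.parts a then 1 else 0)
      + (if j = X.parts b + 1 then 1 else 0) := by
  have hbn : X.parts b + 1 ≤ X.parts b + 1 := le_rfl
  rcases eq_or_ne j (X.parts a) with rfl | hja
  · rw [if_pos rfl, if_neg hvw]
    have han : a < n := mem_support_lt X (by rw [Finsupp.mem_support_iff]; omega)
    have hmem : a ∈ (Finset.range n).filter (fun r => X.parts a ≤ X.parts r) := by
      simp only [Finset.mem_filter, Finset.mem_range]
      exact ⟨han, le_rfl⟩
    have hset : (Finset.range n).filter (fun r => X.parts a ≤ Y.parts r)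
        = ((Finset.range n).filter (fun r => X.parts a ≤ X.parts r)).erase a := by
      ext r
      simp only [Finset.mem_filter, Finset.mem_range, Finset.mem_erase]
      rcases eq_or_ne r a with rfl | hra
      · omega
      · rcases eq_or_ne r b with rfl | hrb
        · have := h2; omega
        · have := h3 r hra hrb; omega
    rw [cntGe, cntGe, hset, Finset.card_erase_of_mem hmem]
    have hpos : 0 < ((Finset.range n).filter (fun r => X.parts a ≤ X.parts r)).card :=
      Finset.card_pos.mpr ⟨a, hmem⟩
    omega
  · rcases eq_or_ne j (X.parts b + 1) with rfl | hjb
    · rw [if_neg hja, if_pos rfl]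
      have hbn' : b < n := mem_support_lt Y (by rw [Finsupp.mem_support_iff]; omega)
      have hnmem : b ∉ (Finset.range n).filter (fun r => X.parts b + 1 ≤ X.parts r) := by
        simp only [Finset.mem_filter, Finset.mem_range]
        omega
      have hset : (Finset.range n).filter (fun r => X.parts b + 1 ≤ Y.parts r)
          = insert b ((Finset.range n).filter (fun r => X.parts b + 1 ≤ X.parts r)) := by
        ext r
        simp only [Finset.mem_filter, Finset.mem_range, Finset.mem_insert]
        rcases eq_or_ne r a with rfl | hra
        · omega
        · rcases eq_or_ne r b with rfl | hrb
          · omega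
          · have := h3 r hra hrb; omega
      rw [cntGe, cntGe, hset, Finset.card_insert_of_notMem hnmem]
      push_cast
      ring
    · rw [if_neg hja, if_neg hjb]
      have hset : (Finset.range n).filter (fun r => j ≤ Y.parts r)
          = (Finset.range n).filter (fun r => j ≤ X.parts r) := by
        ext r
        simp only [Finset.mem_filter, Finset.mem_range]
        rcases eq_or_ne r a with rfl | hra
        · omega
        · rcases eq_or_ne r b with rfl | hrb
          · omega
          · have := h3 r hra hrb; omega
      rw [cntGe, cntGe, hset]
      push_cast
      ring

lemma zero_notin_transferRows (f : IntPartition n) (rc ra : ℕ) :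
    (0:ℕ) ∉ f.transferRows rc ra := by
  rw [transferRows]
  intro h
  rcases Multiset.mem_add.mp h with h | h
  · exact zero_notin_rows f (Multiset.mem_of_mem_erase (Multiset.mem_of_mem_erase h))
  · have := Multiset.of_mem_filter h
    omega

lemma parts_to_rows {X Y : IntPartition n} {a b : ℕ} (hrm : X.IsRemovableRow a)
    (had : X.IsAddableRow b) (hab : a ≠ b) (hvw : X.parts a ≠ X.parts b + 1)
    (h1 : Y.parts a = X.parts a - 1) (h2 : Y.parts b = X.parts b + 1)
    (h3 : ∀ r, r ≠ a → r ≠ b → Y.parts r = X.parts r) :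
    Y.rows = X.transferRows a b := by
  have hv : 1 ≤ X.parts a := removable_one_le hrm
  apply Multiset.ext.mpr
  intro k
  rcases Nat.eq_zero_or_pos k with rfl | hk
  · rw [Multiset.count_eq_zero_of_notMem (zero_notin_rows Y),
      Multiset.count_eq_zero_of_notMem (zero_notin_transferRows X a b)]
  · have c1 := cntR_count Y.rows k
    have c2 := cntR_count (X.transferRows a b) k
    have r1 := cntR_rows Y (show 1 ≤ k by omega)
    have r2 := cntR_rows Y (show 1 ≤ k + 1 by omega)
    have t1 := cntR_transferRows X hrm had hab (show 1 ≤ k by omega)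
    have t2 := cntR_transferRows X hrm had hab (show 1 ≤ k + 1 by omega)
    have u1 := cntGe_update hab hv hvw h1 h2 h3 (show 1 ≤ k by omega)
    have u2 := cntGe_update hab hv hvw h1 h2 h3 (show 1 ≤ k + 1 by omega)
    omega

lemma transfer_symm {f g : IntPartition n} {rc ra : ℕ} (h : IsTransfer f g rc ra) :
    IsTransfer g f ra rc := by
  obtain ⟨hvw, hp1, hp2, hp3⟩ := transfer_parts h
  obtain ⟨hrm, had, hne, hgf, hrows⟩ := h
  have hv : 1 ≤ f.parts rc := removable_one_le hrm
  have hrm' : g.IsRemovableRow ra := by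
    rw [IsRemovableRow]
    rcases eq_or_ne (ra + 1) rc with he | he
    · rw [he, hp1, hp2]
      have := f.antitone (show ra ≤ rc by omega)
      omega
    · rw [hp3 (ra+1) he (by omega), hp2]
      have := f.antitone (show ra ≤ ra + 1 by omega)
      omega
  have had' : g.IsAddableRow rc := by
    rw [IsAddableRow]
    rcases Nat.eq_zero_or_pos rc with rfl | hrc0
    · left; rfl
    · right
      rcases eq_or_ne (rc - 1) ra with he | he
      · rw [he, hp2, hp1]
        have := f.antitone (show ra ≤ rc by omega)
        omega
      · rw [hp3 (rc-1) (by omega) he, hp1]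
        have := f.antitone (show rc - 1 ≤ rc by omega)
        omega
  refine ⟨hrm', had', Ne.symm hne, Ne.symm hgf, ?_⟩
  apply parts_to_rows hrm' had' (Ne.symm hne)
  · rw [hp1, hp2]; omega
  · rw [hp2]; omega
  · rw [hp1]; omega
  · intro r hra hrc
    exact (hp3 r hrc hra).symm

lemma tri (f g g' : ℕ → ℕ) (rc ra rc' ra' s t : ℕ)
    (h2 : rc' ≠ ra') (h3 : s ≠ t) (h4 : rc ≠ rc') (h5 : ra ≠ ra')
    (hfrc : 1 ≤ f rc) (hfrc' : 1 ≤ f rc')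
    (hg1 : g rc = f rc - 1) (hg2 : g ra = f ra + 1) (hg3 : ∀ r, r ≠ rc → r ≠ ra → g r = f r)
    (hg'1 : g' rc' = f rc' - 1) (hg'2 : g' ra' = f ra' + 1) (hg'3 : ∀ r, r ≠ rc' → r ≠ ra' → g' r = f r)
    (hd1 : g' s = g s - 1) (hd2 : g' t = g t + 1) (hd3 : ∀ r, r ≠ s → r ≠ t → g' r = g r) : False := by
  have hrcs : rc' = s ∨ rc' = t := by
    by_contra hcon
    push_neg at hcon
    have e1 := hd3 rc' hcon.1 hcon.2
    rcases eq_or_ne rc' ra with hr | hr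
    · rw [← hr] at hg2; omega
    · have e2 := hg3 rc' (Ne.symm h4) hr; omega
  have hras : ra' = s ∨ ra' = t := by
    by_contra hcon
    push_neg at hcon
    have e1 := hd3 ra' hcon.1 hcon.2
    rcases eq_or_ne ra' rc with hr | hr
    · rw [← hr] at hg1 hfrc; omega
    · have e2 := hg3 ra' hr (Ne.symm h5); omega
  rcases hrcs with hA | hA <;> rcases hras with hB | hB
  · exact h2 (hA.trans hB.symm)
  · subst hA; subst hB
    rcases eq_or_ne rc ra' with hr | hr
    · rw [hr] at hg1 hfrc; omega
    · have e1 := hd3 rc h4 hr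
      have e2 := hg'3 rc h4 hr
      omega
  · subst hA; subst hB
    rcases eq_or_ne rc' rc with hr | hr
    · rw [hr] at hg'1 hfrc' hd2; omega
    · rcases eq_or_ne rc' ra with hr2 | hr2
      · rw [hr2] at hg'1 hd2; omega
      · have e1 := hg3 rc' hr hr2; omega
  · exact h2 (hA.trans hB.symm)

end IntPartition

/-- Every clique in `G_n` containing a fixed vertex `λ` is contained
in a star-simplex `{λ} ∪ {λ(c → a) : a ∈ A}` for a single removable corner `c`, or in a
top-simplex `{λ} ∪ {λ(c → a) : c ∈ C}` for a single addable corner `a`. -/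
theorem clique_in_star_or_top {n : ℕ} (f : IntPartition n) (Q : Finset (IntPartition n))
    (hf : f ∈ Q)
    (hclique : ∀ g ∈ Q, ∀ g' ∈ Q, g ≠ g' → IntPartition.Adj g g') :
    (∃ rc, ∀ g ∈ Q, g = f ∨ ∃ ra, IntPartition.IsTransfer f g rc ra) ∨
    (∃ ra, ∀ g ∈ Q, g = f ∨ ∃ rc, IntPartition.IsTransfer f g rc ra) := by
  classical
  have key : ∀ g : IntPartition n, ∃ p : ℕ × ℕ,
      g ∈ Q → g ≠ f → IntPartition.IsTransfer f g p.1 p.2 := by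
    intro g
    by_cases h : g ∈ Q ∧ g ≠ f
    · rcases hclique f hf g h.1 (Ne.symm h.2) with ⟨rc, ra, ht⟩ | ⟨rc, ra, ht⟩
      · exact ⟨(rc, ra), fun _ _ => ht⟩
      · exact ⟨(ra, rc), fun _ _ => IntPartition.transfer_symm ht⟩
    · exact ⟨(0, 0), fun h1 h2 => absurd ⟨h1, h2⟩ h⟩
  choose P hP using key
  have pairwise : ∀ g ∈ Q, ∀ g' ∈ Q, g ≠ f → g' ≠ f → g ≠ g' →
      (P g).1 = (P g').1 ∨ (P g).2 = (P g').2 := by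
    intro g hg g' hg' hgf hg'f hgg'
    by_contra hcon
    push_neg at hcon
    obtain ⟨hc1, hc2⟩ := hcon
    obtain ⟨s, t, hst⟩ : ∃ s t, IntPartition.IsTransfer g g' s t := by
      rcases hclique g hg g' hg' hgg' with ⟨s, t, h⟩ | ⟨s, t, h⟩
      · exact ⟨s, t, h⟩
      · exact ⟨t, s, IntPartition.transfer_symm h⟩
    have ht := hP g hg hgf
    have ht' := hP g' hg' hg'f
    obtain ⟨_, a1, a2, a3⟩ := IntPartition.transfer_parts ht
    obtain ⟨_, b1, b2, b3⟩ := IntPartition.transfer_parts ht'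
    obtain ⟨_, d1, d2, d3⟩ := IntPartition.transfer_parts hst
    exact IntPartition.tri (f.parts) (g.parts) (g'.parts) (P g).1 (P g).2 (P g').1 (P g').2 s t
      ht'.2.2.1 hst.2.2.1 hc1 hc2
      (IntPartition.removable_one_le ht.1) (IntPartition.removable_one_le ht'.1)
      a1 a2 a3 b1 b2 b3 d1 d2 d3
  by_cases hv : ∀ g ∈ Q, ∀ g' ∈ Q, g ≠ f → g' ≠ f → (P g).1 = (P g').1
  · by_cases hex : ∃ g0 ∈ Q, g0 ≠ f
    · obtain ⟨g0, hg0, hg0f⟩ := hex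
      left
      refine ⟨(P g0).1, fun g hg => ?_⟩
      by_cases hgf : g = f
      · exact Or.inl hgf
      · right
        have := hP g hg hgf
        rw [hv g hg g0 hg0 hgf hg0f] at this
        exact ⟨(P g).2, this⟩
    · push_neg at hex
      exact Or.inl ⟨0, fun g hg => Or.inl (hex g hg)⟩
  · push_neg at hv
    obtain ⟨x, hx, y, hy, hxf, hyf, hxy1⟩ := hv
    have hxy : x ≠ y := fun h => hxy1 (by rw [h])
    right
    refine ⟨(P x).2, fun g hg => ?_⟩
    by_cases hgf : g = f
    · exact Or.inl hgf
    · right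
      refine ⟨(P g).1, ?_⟩
      have hgx : (P g).2 = (P x).2 := by
        by_cases hgex : g = x
        · rw [hgex]
        · rcases pairwise g hg x hx hgf hxf hgex with h1 | h2
          · by_cases hgey : g = y
            · exact absurd (hgey ▸ h1 : (P y).1 = (P x).1) (Ne.symm hxy1)
            · rcases pairwise g hg y hy hgf hyf hgey with h1' | h2'
              · exact absurd (h1.symm.trans h1') hxy1
              · -- (P g).2 = (P y).2 but we need = (P x).2; combine with pairwise x y
                rcases pairwise x hx y hy hxf hyf hxy with hxy2 | hxy2
                · exact absurd hxy2 hxy1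
                · rw [h2', ← hxy2]
          · exact h2
      have := hP g hg hgf
      rwa [hgx] at this
end

section
/- Let λ be a partition of n and let μ₁ = λ(c₁→a₁) and μ₂ = λ(c₂→a₂) be neighbors of λ with h(μ₁) < h(λ) and h(μ₂) < h(λ), c₁ ≠ c₂, a₁ ≠ a₂, and r(c₁) ≤ r(c₂). Then the transfer ν := λ(c₂→a₁) is admissible, ν is adjacent to both μ₁ and μ₂ in G_n, and h(ν) < h(λ). -/
open Finset

/-- A partition of `n`: a finitely supported weakly decreasing sequence of
row lengths (rows indexed from `0`) summing to `n`. -/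
structure PartitionN (n : ℕ) where
  parts : ℕ →₀ ℕ
  antitone : ∀ ⦃i j : ℕ⦄, i ≤ j → parts j ≤ parts i
  total : parts.sum (fun _ m => m) = n

namespace PartitionN

variable {n : ℕ}

/-- The multiset of (positive) row lengths of a partition. -/
def rows (f : PartitionN n) : Multiset ℕ := f.parts.support.val.map f.parts

/-- `conj f j` is the number of rows of length at least `j + 1`; i.e. the length of
the `(j+1)`-st column (columns indexed from `0`), the conjugate partition `λ'`. -/
def conj (f : PartitionN n) (j : ℕ) : ℕ :=
  (f.rows.filter (fun m => j + 1 ≤ m)).card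

/-- The height `h(λ) = ∑ i · λ_i`, rows indexed from `1`. -/
def height (f : PartitionN n) : ℕ :=
  ∑ i ∈ f.parts.support, (i + 1) * f.parts i

/-- Row `r` (0-indexed) of `f` carries a removable corner: removing its last cell
again yields a partition. -/
def IsRemovableRow (f : PartitionN n) (r : ℕ) : Prop :=
  f.parts (r + 1) < f.parts r

/-- Row `r` (0-indexed) of `f` carries an addable corner: adding a cell at the end
of this row again yields a partition. -/
def IsAddableRow (f : PartitionN n) (r : ℕ) : Prop :=
  r = 0 ∨ f.parts r < f.parts (r - 1)

/-- The multiset of rows obtained from `f` by removing one cell from the corner in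
row `rc` and adding one cell at the corner in row `ra` (zero rows discarded);
reordering is built in since this is a multiset. -/
def transferRows (f : PartitionN n) (rc ra : ℕ) : Multiset ℕ :=
  ((f.rows.erase (f.parts rc)).erase (f.parts ra))
    + Multiset.filter (fun m => 0 < m) {f.parts rc - 1, f.parts ra + 1}

/-- `IsTransfer f g rc ra` : `g = λ(c → a)` is obtained from `f = λ` by the admissible
transfer of one cell from the removable corner `c` in row `rc` to the addable corner
`a` in row `ra ≠ rc`, followed by reordering, and `g ≠ f`. -/
def IsTransfer (f g : PartitionN n) (rc ra : ℕ) : Prop :=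
  f.IsRemovableRow rc ∧ f.IsAddableRow ra ∧ rc ≠ ra ∧ g ≠ f ∧
    g.rows = f.transferRows rc ra

/-- Adjacency in the partition graph `G_n`. -/
def Adj (f g : PartitionN n) : Prop :=
  (∃ rc ra, IsTransfer f g rc ra) ∨ (∃ rc ra, IsTransfer g f rc ra)

/-- The one-row partition `(n)`. -/
noncomputable def onerow (n : ℕ) : PartitionN n where
  parts := Finsupp.single 0 n
  antitone := by
    intro i j hij
    by_cases hi : i = 0
    · subst hi
      by_cases hj : j = 0 <;> simp [Finsupp.single_apply, eq_comm, hj]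
    · have hj : j ≠ 0 := by omega
      simp [Finsupp.single_apply, eq_comm, hi, hj]
  total := Finsupp.sum_single_index rfl

end PartitionN

/-! ### Auxiliary machinery -/

namespace PartitionN

variable {n : ℕ}

/-- `posM x` is `{x}` if `x` is positive, else `0`. -/
def posM (x : ℕ) : Multiset ℕ := if 0 < x then {x} else 0

lemma mem_posM {m x : ℕ} (h : m ∈ posM x) : 0 < m ∧ m = x := by
  unfold posM at h
  split at h <;> simp_all

lemma filter_pair (a b : ℕ) :
    Multiset.filter (fun m => 0 < m) {a, b} = posM a + posM b := by
  have h : ({a, b} : Multiset ℕ) = a ::ₘ {b} := rfl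
  rw [h, Multiset.filter_cons, Multiset.filter_singleton]
  rfl

lemma filter_triple (a b c : ℕ) :
    Multiset.filter (fun m => 0 < m) {a, b, c} = posM a + posM b + posM c := by
  have h : ({a, b, c} : Multiset ℕ) = a ::ₘ {b, c} := rfl
  rw [h, Multiset.filter_cons, filter_pair, ← add_assoc]
  rfl

lemma erase_add_posM (s : Multiset ℕ) (x : ℕ) (hs : ∀ m ∈ s, 0 < m) :
    (s + posM x).erase x = s := by
  unfold posM
  split_ifs with h
  · rw [add_comm, Multiset.singleton_add, Multiset.erase_cons_head]
  · have hx : x ∉ s := fun hm => h (hs x hm)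
    rw [add_zero, Multiset.erase_of_notMem hx]

lemma mem_add_pos {s t : Multiset ℕ} (hs : ∀ m ∈ s, 0 < m) (ht : ∀ m ∈ t, 0 < m) :
    ∀ m ∈ s + t, 0 < m := by
  intro m hm
  rcases Multiset.mem_add.1 hm with h | h
  · exact hs m h
  · exact ht m h

lemma mem_posM_pos {x : ℕ} : ∀ m ∈ posM x, 0 < m := fun _ hm => (mem_posM hm).1

/-- Splitting the mapped support of a finsupp along a finset `T`. -/
lemma map_support_split (q : ℕ →₀ ℕ) (T : Finset ℕ) :
    q.support.val.map q
      = ((q.support \ T).val.map q)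
        + Multiset.filter (fun m => 0 < m) (T.val.map q) := by
  classical
  have h2 : T.filter ((fun m => 0 < m) ∘ ⇑q) = q.support ∩ T := by
    ext j
    simp only [Function.comp, Finset.mem_filter, Finset.mem_inter, Finsupp.mem_support_iff]
    constructor
    · rintro ⟨hjT, hj⟩; exact ⟨by omega, hjT⟩
    · rintro ⟨hj, hjT⟩; exact ⟨hjT, by omega⟩
  have h1 : Multiset.filter (fun m => 0 < m) (T.val.map q)
      = (q.support ∩ T).val.map q := by
    rw [Multiset.filter_map, ← Finset.filter_val, h2]
  rw [h1]
  have hval : q.support.val = (q.support \ T).val + (q.support ∩ T).val := by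
    have hnd : ((q.support \ T).val + (q.support ∩ T).val).Nodup := by
      rw [Multiset.nodup_add]
      refine ⟨(q.support \ T).nodup, (q.support ∩ T).nodup, ?_⟩
      rw [Multiset.disjoint_left]
      intro a ha hb
      have ha' : a ∈ q.support \ T := ha
      have hb' : a ∈ q.support ∩ T := hb
      exact (Finset.mem_sdiff.1 ha').2 (Finset.mem_inter.1 hb').2
    rw [Multiset.Nodup.ext q.support.nodup hnd]
    intro a
    simp only [Multiset.mem_add, Finset.mem_val, Finset.mem_sdiff, Finset.mem_inter]
    by_cases haT : a ∈ T <;> by_cases has : a ∈ q.support <;> tauto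
  rw [hval, Multiset.map_add]

lemma mem_map_sdiff_pos {q : ℕ →₀ ℕ} {T : Finset ℕ} :
    ∀ m ∈ (q.support \ T).val.map q, 0 < m := by
  intro m hm
  obtain ⟨j, hj, rfl⟩ := Multiset.mem_map.1 hm
  have hj' : j ∈ q.support \ T := hj
  have := (Finset.mem_sdiff.1 hj').1
  rw [Finsupp.mem_support_iff] at this
  omega

lemma map_sdiff_congr (q p : ℕ →₀ ℕ) (T : Finset ℕ) (h : ∀ j ∉ T, q j = p j) :
    (q.support \ T).val.map q = (p.support \ T).val.map p := by
  have hs : q.support \ T = p.support \ T := by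
    ext j
    simp only [Finset.mem_sdiff, Finsupp.mem_support_iff]
    constructor
    · rintro ⟨hj, hjT⟩; exact ⟨by rw [← h j hjT]; exact hj, hjT⟩
    · rintro ⟨hj, hjT⟩; exact ⟨by rw [h j hjT]; exact hj, hjT⟩
  rw [hs]
  apply Multiset.map_congr rfl
  intro j hj
  have hj' : j ∈ p.support \ T := hj
  exact h j (Finset.mem_sdiff.1 hj').2

/-- Splitting the rows of a partition along two distinguished row indices. -/
lemma rows_split2 (f : PartitionN n) {a b : ℕ} (hab : a ≠ b) :
    f.rows = ((f.parts.support \ {a, b}).val.map f.parts)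
      + posM (f.parts a) + posM (f.parts b) := by
  have h := map_support_split f.parts {a, b}
  have hv : ({a, b} : Finset ℕ).val = a ::ₘ {b} := by
    rw [show ({a, b} : Finset ℕ) = insert a {b} from rfl,
      Finset.insert_val_of_notMem (by simp [hab])]
    rfl
  rw [rows, h, hv]
  have hm : Multiset.map f.parts (a ::ₘ {b}) = {f.parts a, f.parts b} := by simp
  rw [hm, filter_pair, ← add_assoc]

/-- Splitting the rows of a partition along three distinguished row indices. -/
lemma rows_split3 (f : PartitionN n) {a b c : ℕ} (hab : a ≠ b) (hac : a ≠ c) (hbc : b ≠ c) :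
    f.rows = ((f.parts.support \ {a, b, c}).val.map f.parts)
      + posM (f.parts a) + posM (f.parts b) + posM (f.parts c) := by
  have h := map_support_split f.parts {a, b, c}
  have hv : ({a, b, c} : Finset ℕ).val = a ::ₘ b ::ₘ {c} := by
    rw [show ({a, b, c} : Finset ℕ) = insert a (insert b {c}) from rfl,
      Finset.insert_val_of_notMem (by simp [hab, hac]),
      Finset.insert_val_of_notMem (by simp [hbc])]
    rfl
  rw [rows, h, hv]
  have hm : Multiset.map f.parts (a ::ₘ b ::ₘ {c})
      = {f.parts a, f.parts b, f.parts c} := by simp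
  rw [hm, filter_triple, ← add_assoc, ← add_assoc]

lemma transferRows_eq (f : PartitionN n) (rc ra : ℕ) :
    f.transferRows rc ra = ((f.rows.erase (f.parts rc)).erase (f.parts ra))
      + posM (f.parts rc - 1) + posM (f.parts ra + 1) := by
  rw [transferRows, filter_pair, ← add_assoc]

/-! ### Reconstructing a partition from its rows -/

lemma parts_le_iff (f : PartitionN n) {k : ℕ} (hk : 1 ≤ k) (i : ℕ) :
    k ≤ f.parts i ↔ i < (f.rows.filter (fun m => k ≤ m)).card := by
  classical
  have h1 : (f.rows.filter (fun m => k ≤ m)).card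
      = (f.parts.support.filter ((fun m => k ≤ m) ∘ ⇑f.parts)).card := by
    rw [rows, Multiset.filter_map, Multiset.card_map, ← Finset.filter_val]
    rfl
  rw [h1]
  set S := f.parts.support.filter ((fun m => k ≤ m) ∘ ⇑f.parts) with hS
  have hmemS : ∀ j, j ∈ S ↔ k ≤ f.parts j := by
    intro j
    rw [hS, Finset.mem_filter, Finsupp.mem_support_iff]
    constructor
    · rintro ⟨_, hj⟩; exact hj
    · intro hj; exact ⟨by omega, hj⟩
  constructor
  · intro hki
    have hsub : Finset.range (i + 1) ⊆ S := by
      intro j hj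
      rw [Finset.mem_range] at hj
      have hji : j ≤ i := by omega
      exact (hmemS j).2 (le_trans hki (f.antitone hji))
    calc i < i + 1 := by omega
      _ = (Finset.range (i + 1)).card := (Finset.card_range _).symm
      _ ≤ S.card := Finset.card_le_card hsub
  · intro hi
    by_contra hpi
    push_neg at hpi
    have hsub : S ⊆ Finset.range i := by
      intro j hj
      rw [hmemS j] at hj
      rw [Finset.mem_range]
      by_contra hij
      push_neg at hij
      have := f.antitone hij
      omega
    have := Finset.card_le_card hsub
    rw [Finset.card_range] at this
    omega

lemma parts_ext {f g : PartitionN n} (h : f.rows = g.rows) : f.parts = g.parts := by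
  ext i
  have key : ∀ k, 1 ≤ k → (k ≤ f.parts i ↔ k ≤ g.parts i) := by
    intro k hk
    rw [parts_le_iff f hk, parts_le_iff g hk, h]
  have h1 : f.parts i ≤ g.parts i := by
    rcases Nat.eq_zero_or_pos (f.parts i) with h0 | h0
    · omega
    · exact (key _ h0).1 le_rfl
  have h2 : g.parts i ≤ f.parts i := by
    rcases Nat.eq_zero_or_pos (g.parts i) with h0 | h0
    · omega
    · exact (key _ h0).2 le_rfl
  omega

lemma height_congr {f g : PartitionN n} (h : f.parts = g.parts) : f.height = g.height := by
  unfold height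
  rw [h]

/-! ### The explicit transferred partition -/

/-- The finsupp obtained from `p` by removing one from `p rc` and adding one to `p ra`. -/
noncomputable def tparts (p : ℕ →₀ ℕ) (rc ra : ℕ) : ℕ →₀ ℕ :=
  (p.update rc (p rc - 1)).update ra (p ra + 1)

lemma tparts_apply (p : ℕ →₀ ℕ) {rc ra : ℕ} (hne : rc ≠ ra) (j : ℕ) :
    tparts p rc ra j = if j = ra then p ra + 1 else if j = rc then p rc - 1 else p j := by
  classical
  unfold tparts
  simp only [Finsupp.coe_update, Function.update_apply]

lemma tparts_apply_ra (p : ℕ →₀ ℕ) {rc ra : ℕ} (hne : rc ≠ ra) :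
    tparts p rc ra ra = p ra + 1 := by rw [tparts_apply p hne, if_pos rfl]

lemma tparts_apply_rc (p : ℕ →₀ ℕ) {rc ra : ℕ} (hne : rc ≠ ra) :
    tparts p rc ra rc = p rc - 1 := by
  rw [tparts_apply p hne, if_neg hne, if_pos rfl]

lemma tparts_apply_other (p : ℕ →₀ ℕ) {rc ra : ℕ} (hne : rc ≠ ra) {j : ℕ}
    (h1 : j ≠ rc) (h2 : j ≠ ra) : tparts p rc ra j = p j := by
  rw [tparts_apply p hne, if_neg h2, if_neg h1]

lemma sum_tparts (w : ℕ → ℕ) (p : ℕ →₀ ℕ) {rc ra : ℕ} (hne : rc ≠ ra) (hpos : 1 ≤ p rc) :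
    (∑ i ∈ (tparts p rc ra).support, w i * tparts p rc ra i) + w rc
      = (∑ i ∈ p.support, w i * p i) + w ra := by
  classical
  set q := tparts p rc ra with hqdef
  set U : Finset ℕ := p.support ∪ q.support ∪ {rc, ra} with hU
  have hrcU : rc ∈ U := by simp [hU]
  have hraU : ra ∈ U := by simp [hU]
  have e1 : ∑ i ∈ q.support, w i * q i = ∑ i ∈ U, w i * q i := by
    apply Finset.sum_subset
    · intro i hi; simp [hU, hi]
    · intro i _ hi
      rw [Finsupp.notMem_support_iff.1 hi, mul_zero]
  have e2 : ∑ i ∈ p.support, w i * p i = ∑ i ∈ U, w i * p i := by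
    apply Finset.sum_subset
    · intro i hi; simp [hU, hi]
    · intro i _ hi
      rw [Finsupp.notMem_support_iff.1 hi, mul_zero]
  have hraU' : ra ∈ U.erase rc := Finset.mem_erase.2 ⟨Ne.symm hne, hraU⟩
  have esplit : ∀ v : ℕ → ℕ,
      ∑ i ∈ U, w i * v i
        = (∑ i ∈ (U.erase rc).erase ra, w i * v i) + w ra * v ra + w rc * v rc := by
    intro v
    rw [Finset.sum_erase_add _ _ hraU', Finset.sum_erase_add _ _ hrcU]
  have hcongr : ∑ i ∈ (U.erase rc).erase ra, w i * q i
      = ∑ i ∈ (U.erase rc).erase ra, w i * p i := by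
    apply Finset.sum_congr rfl
    intro i hi
    rw [Finset.mem_erase, Finset.mem_erase] at hi
    rw [hqdef, tparts_apply_other p hne hi.2.1 hi.1]
  have hqra : q ra = p ra + 1 := tparts_apply_ra p hne
  have hqrc : q rc = p rc - 1 := tparts_apply_rc p hne
  obtain ⟨k, hk⟩ : ∃ k, p rc = k + 1 := ⟨p rc - 1, by omega⟩
  rw [e1, e2, esplit (fun i => q i), esplit (fun i => p i), hcongr, hqra, hqrc, hk]
  have hk1 : k + 1 - 1 = k := by omega
  rw [hk1]
  ring

/-- The transferred partition `λ(c → a)`, in the case where it is given by the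
pointwise modification of the parts. -/
noncomputable def transferred (f : PartitionN n) (rc ra : ℕ)
    (hrem : f.IsRemovableRow rc) (hadd : f.IsAddableRow ra) (hne : rc ≠ ra)
    (hgood : ra < rc ∨ f.parts ra + 2 ≤ f.parts rc) : PartitionN n where
  parts := tparts f.parts rc ra
  antitone := by
    have hrem' : f.parts (rc + 1) < f.parts rc := hrem
    have step : ∀ i, tparts f.parts rc ra (i + 1) ≤ tparts f.parts rc ra i := by
      intro i
      have B1 : f.parts (i + 1) ≤ f.parts i := f.antitone (Nat.le_succ i)
      by_cases h3 : i + 1 = ra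
      · subst h3
        have hadd' : f.parts (i + 1) < f.parts i := by
          rcases hadd with h | h
          · omega
          · simpa using h
        rw [tparts_apply_ra f.parts hne]
        by_cases h2 : i = rc
        · subst h2
          rw [tparts_apply_rc f.parts hne]
          rcases hgood with h | h <;> omega
        · rw [tparts_apply_other f.parts hne h2 (by omega)]
          omega
      · by_cases h4 : i + 1 = rc
        · subst h4
          rw [tparts_apply_rc f.parts hne]
          by_cases h1 : i = ra
          · subst h1
            rw [tparts_apply_ra f.parts hne]
            omega
          · rw [tparts_apply_other f.parts hne (by omega) h1]
            omega
        · rw [tparts_apply_other f.parts hne h4 h3]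
          by_cases h1 : i = ra
          · subst h1
            rw [tparts_apply_ra f.parts hne]
            omega
          · by_cases h2 : i = rc
            · subst h2
              rw [tparts_apply_rc f.parts hne]
              omega
            · rw [tparts_apply_other f.parts hne h2 h1]
              exact B1
    intro i j hij
    exact antitone_nat_of_succ_le step hij
  total := by
    have hrem' : f.parts (rc + 1) < f.parts rc := hrem
    have hpos : 1 ≤ f.parts rc := by omega
    have h := sum_tparts (fun _ => 1) f.parts hne hpos
    simp only [one_mul] at h
    have hq : (tparts f.parts rc ra).sum (fun _ m => m)
        = ∑ i ∈ (tparts f.parts rc ra).support, tparts f.parts rc ra i := rfl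
    have hp : f.parts.sum (fun _ m => m) = ∑ i ∈ f.parts.support, f.parts i := rfl
    have ht := f.total
    rw [hp] at ht
    rw [hq]
    omega

lemma height_transferred (f : PartitionN n) (rc ra : ℕ)
    (hrem : f.IsRemovableRow rc) (hadd : f.IsAddableRow ra) (hne : rc ≠ ra)
    (hgood : ra < rc ∨ f.parts ra + 2 ≤ f.parts rc) :
    (transferred f rc ra hrem hadd hne hgood).height + (rc + 1) = f.height + (ra + 1) := by
  have hrem' : f.parts (rc + 1) < f.parts rc := hrem
  have hpos : 1 ≤ f.parts rc := by omega
  exact sum_tparts (fun i => i + 1) f.parts hne hpos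

lemma rows_transferred (f : PartitionN n) (rc ra : ℕ)
    (hrem : f.IsRemovableRow rc) (hadd : f.IsAddableRow ra) (hne : rc ≠ ra)
    (hgood : ra < rc ∨ f.parts ra + 2 ≤ f.parts rc) :
    (transferred f rc ra hrem hadd hne hgood).rows = f.transferRows rc ra := by
  set ν := transferred f rc ra hrem hadd hne hgood with hν
  have hνp : ν.parts = tparts f.parts rc ra := rfl
  have hagree : ∀ j ∉ ({rc, ra} : Finset ℕ), ν.parts j = f.parts j := by
    intro j hj
    simp only [Finset.mem_insert, Finset.mem_singleton] at hj
    push_neg at hj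
    rw [hνp]
    exact tparts_apply_other f.parts hne hj.1 hj.2
  have hN : (ν.parts.support \ {rc, ra}).val.map ν.parts
      = (f.parts.support \ {rc, ra}).val.map f.parts :=
    map_sdiff_congr _ _ _ hagree
  have hL : ν.rows = ((f.parts.support \ {rc, ra}).val.map f.parts)
      + posM (f.parts rc - 1) + posM (f.parts ra + 1) := by
    rw [rows_split2 ν hne, hN,
      show ν.parts rc = f.parts rc - 1 from by rw [hνp]; exact tparts_apply_rc f.parts hne,
      show ν.parts ra = f.parts ra + 1 from by rw [hνp]; exact tparts_apply_ra f.parts hne]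
  have hsplit := rows_split2 f (Ne.symm hne)
  rw [Finset.pair_comm ra rc] at hsplit
  rw [hL, transferRows_eq, hsplit,
    erase_add_posM _ _ (mem_add_pos mem_map_sdiff_pos mem_posM_pos),
    erase_add_posM _ _ mem_map_sdiff_pos]

/-- The key structural lemma: a height-decreasing admissible transfer moves a cell
strictly upwards, the resulting parts are the pointwise modification, and the height
changes exactly by the difference of the row indices. -/
lemma down {f g : PartitionN n} {rc ra : ℕ} (ht : IsTransfer f g rc ra)
    (hh : g.height < f.height) :
    ra < rc ∧ g.parts = tparts f.parts rc ra ∧ g.height + rc = f.height + ra := by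
  obtain ⟨hrem, hadd, hne, hgne, hrows⟩ := ht
  have hrem' : f.parts (rc + 1) < f.parts rc := hrem
  by_cases hgood : ra < rc ∨ f.parts ra + 2 ≤ f.parts rc
  · have hr : g.rows = (transferred f rc ra hrem hadd hne hgood).rows := by
      rw [hrows, rows_transferred]
    have hparts : g.parts = (transferred f rc ra hrem hadd hne hgood).parts :=
      parts_ext hr
    have hgh : g.height = (transferred f rc ra hrem hadd hne hgood).height :=
      height_congr hparts
    have hht := height_transferred f rc ra hrem hadd hne hgood
    have hra : ra < rc := by
      rcases hgood with h | h
      · exact h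
      · omega
    exact ⟨hra, hparts, by omega⟩
  · push_neg at hgood
    obtain ⟨hge, hlt⟩ := hgood
    have hcr : rc < ra := by omega
    have h1 : f.parts ra ≤ f.parts (rc + 1) := f.antitone (by omega)
    have heq : f.parts ra = f.parts rc - 1 := by omega
    have hfr : f.transferRows rc ra = f.rows := by
      have hsplit := rows_split2 f (Ne.symm hne)
      rw [transferRows_eq, hsplit,
        erase_add_posM _ _ (mem_add_pos mem_map_sdiff_pos mem_posM_pos),
        erase_add_posM _ _ mem_map_sdiff_pos,
        show f.parts rc - 1 = f.parts ra from heq.symm,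
        show f.parts ra + 1 = f.parts rc from by omega]
    have hparts : g.parts = f.parts := parts_ext (by rw [hrows, hfr])
    have := height_congr hparts
    omega

end PartitionN

set_option maxHeartbeats 1000000 in
/-- Let `μ₁ = λ(c₁ → a₁)` and `μ₂ = λ(c₂ → a₂)` be neighbors of `λ`
with `h(μ₁) < h(λ)`, `h(μ₂) < h(λ)`, `c₁ ≠ c₂`, `a₁ ≠ a₂` and `r(c₁) ≤ r(c₂)`.  Then
the transfer `ν := λ(c₂ → a₁)` is admissible, `ν` is adjacent to both `μ₁` and `μ₂`
in `G_n`, and `h(ν) < h(λ)`. -/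
theorem local_peak_reduction {n : ℕ} (f g₁ g₂ : PartitionN n) (rc₁ ra₁ rc₂ ra₂ : ℕ)
    (h₁ : PartitionN.IsTransfer f g₁ rc₁ ra₁)
    (h₂ : PartitionN.IsTransfer f g₂ rc₂ ra₂)
    (hh₁ : g₁.height < f.height) (hh₂ : g₂.height < f.height)
    (hc : rc₁ ≠ rc₂) (ha : ra₁ ≠ ra₂) (hle : rc₁ ≤ rc₂) :
    ∃ ν : PartitionN n, PartitionN.IsTransfer f ν rc₂ ra₁ ∧
      PartitionN.Adj ν g₁ ∧ PartitionN.Adj ν g₂ ∧ ν.height < f.height := by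
  classical
  obtain ⟨hra1, hp1, hht1⟩ := PartitionN.down h₁ hh₁
  obtain ⟨hra2, hp2, hht2⟩ := PartitionN.down h₂ hh₂
  obtain ⟨hrem1, hadd1, hne1, hgne1, hrows1⟩ := h₁
  obtain ⟨hrem2, hadd2, hne2, hgne2, hrows2⟩ := h₂
  have hrem1' : f.parts (rc₁ + 1) < f.parts rc₁ := hrem1
  have hrem2' : f.parts (rc₂ + 1) < f.parts rc₂ := hrem2
  have hc' : rc₁ < rc₂ := lt_of_le_of_ne hle hc
  have hra1c2 : ra₁ < rc₂ := lt_of_lt_of_le hra1 hle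
  have hne' : rc₂ ≠ ra₁ := by omega
  have hgood : ra₁ < rc₂ ∨ f.parts ra₁ + 2 ≤ f.parts rc₂ := Or.inl hra1c2
  set ν := PartitionN.transferred f rc₂ ra₁ hrem2 hadd1 hne' hgood with hνdef
  have hνp : ν.parts = PartitionN.tparts f.parts rc₂ ra₁ := rfl
  have hνrows : ν.rows = f.transferRows rc₂ ra₁ :=
    PartitionN.rows_transferred f rc₂ ra₁ hrem2 hadd1 hne' hgood
  have hνht : ν.height + (rc₂ + 1) = f.height + (ra₁ + 1) :=
    PartitionN.height_transferred f rc₂ ra₁ hrem2 hadd1 hne' hgood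
  have hνlt : ν.height < f.height := by omega
  have hνra₁ : ν.parts ra₁ = f.parts ra₁ + 1 := by
    rw [hνp]; exact PartitionN.tparts_apply_ra f.parts hne'
  have hνrc₂ : ν.parts rc₂ = f.parts rc₂ - 1 := by
    rw [hνp]; exact PartitionN.tparts_apply_rc f.parts hne'
  have hνother : ∀ j, j ≠ rc₂ → j ≠ ra₁ → ν.parts j = f.parts j := by
    intro j hj1 hj2; rw [hνp]; exact PartitionN.tparts_apply_other f.parts hne' hj1 hj2
  have hg₁ra₁ : g₁.parts ra₁ = f.parts ra₁ + 1 := by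
    rw [hp1]; exact PartitionN.tparts_apply_ra f.parts hne1
  have hg₁rc₁ : g₁.parts rc₁ = f.parts rc₁ - 1 := by
    rw [hp1]; exact PartitionN.tparts_apply_rc f.parts hne1
  have hg₁other : ∀ j, j ≠ rc₁ → j ≠ ra₁ → g₁.parts j = f.parts j := by
    intro j hj1 hj2; rw [hp1]; exact PartitionN.tparts_apply_other f.parts hne1 hj1 hj2
  refine ⟨ν, ⟨hrem2, hadd1, hne', ?_, hνrows⟩,
    Or.inr ⟨rc₂, rc₁, ?_, ?_, Ne.symm hc, ?_, ?_⟩,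
    Or.inl ⟨ra₁, ra₂, ?_, ?_, ha, ?_, ?_⟩, hνlt⟩
  · -- ν ≠ f
    intro e
    have := congrArg PartitionN.height e
    omega
  · -- g₁.IsRemovableRow rc₂
    show g₁.parts (rc₂ + 1) < g₁.parts rc₂
    rw [hg₁other rc₂ (Ne.symm hc) (by omega),
      hg₁other (rc₂ + 1) (by omega) (by omega)]
    exact hrem2'
  · -- g₁.IsAddableRow rc₁
    refine Or.inr ?_
    rw [hg₁rc₁]
    by_cases hx : rc₁ - 1 = ra₁
    · rw [show g₁.parts (rc₁ - 1) = f.parts ra₁ + 1 from by rw [hx, hg₁ra₁]]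
      have := f.antitone (le_of_lt hra1)
      omega
    · rw [hg₁other (rc₁ - 1) (by omega) hx]
      have := f.antitone (show rc₁ - 1 ≤ rc₁ by omega)
      omega
  · -- ν ≠ g₁
    intro e
    have := congrArg PartitionN.height e
    omega
  · -- ν.rows = g₁.transferRows rc₂ rc₁
    have hd1 : rc₂ ≠ ra₁ := hne'
    have hd2 : rc₂ ≠ rc₁ := Ne.symm hc
    have hd3 : ra₁ ≠ rc₁ := Ne.symm hne1
    have hsf := PartitionN.rows_split3 f hd1 hd2 hd3
    have hpos1 : ∀ m ∈ ((f.parts.support \ ({rc₂, ra₁, rc₁} : Finset ℕ)).val.map f.parts)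
        + PartitionN.posM (f.parts rc₂) + PartitionN.posM (f.parts ra₁), 0 < m :=
      PartitionN.mem_add_pos
        (PartitionN.mem_add_pos PartitionN.mem_map_sdiff_pos PartitionN.mem_posM_pos)
        PartitionN.mem_posM_pos
    have hpos2 : ∀ m ∈ ((f.parts.support \ ({rc₂, ra₁, rc₁} : Finset ℕ)).val.map f.parts)
        + PartitionN.posM (f.parts rc₂), 0 < m :=
      PartitionN.mem_add_pos PartitionN.mem_map_sdiff_pos PartitionN.mem_posM_pos
    have hg1rows : g₁.rows = ((f.parts.support \ ({rc₂, ra₁, rc₁} : Finset ℕ)).val.map f.parts)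
        + PartitionN.posM (f.parts rc₁ - 1) + PartitionN.posM (f.parts ra₁ + 1)
        + PartitionN.posM (f.parts rc₂) := by
      rw [hrows1, PartitionN.transferRows_eq, hsf,
        PartitionN.erase_add_posM _ _ hpos1, PartitionN.erase_add_posM _ _ hpos2]
      abel
    have hpos3 : ∀ m ∈ ((f.parts.support \ ({rc₂, ra₁, rc₁} : Finset ℕ)).val.map f.parts)
        + PartitionN.posM (f.parts rc₁ - 1) + PartitionN.posM (f.parts ra₁ + 1), 0 < m :=
      PartitionN.mem_add_pos
        (PartitionN.mem_add_pos PartitionN.mem_map_sdiff_pos PartitionN.mem_posM_pos)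
        PartitionN.mem_posM_pos
    have hpos4 : ∀ m ∈ ((f.parts.support \ ({rc₂, ra₁, rc₁} : Finset ℕ)).val.map f.parts)
        + PartitionN.posM (f.parts ra₁ + 1), 0 < m :=
      PartitionN.mem_add_pos PartitionN.mem_map_sdiff_pos PartitionN.mem_posM_pos
    rw [PartitionN.transferRows_eq, hg₁other rc₂ (Ne.symm hc) (by omega), hg₁rc₁, hg1rows,
      PartitionN.erase_add_posM _ _ hpos3,
      add_right_comm _ (PartitionN.posM (f.parts rc₁ - 1)) (PartitionN.posM (f.parts ra₁ + 1)),
      PartitionN.erase_add_posM _ _ hpos4,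
      show f.parts rc₁ - 1 + 1 = f.parts rc₁ from by omega]
    -- compute ν.rows
    have hsν := PartitionN.rows_split3 ν (Ne.symm hne') hd3 hd2
    have hagree : ∀ j ∉ ({ra₁, rc₂, rc₁} : Finset ℕ), ν.parts j = f.parts j := by
      intro j hj
      simp only [Finset.mem_insert, Finset.mem_singleton] at hj
      push_neg at hj
      exact hνother j hj.2.1 hj.1
    have hNν := PartitionN.map_sdiff_congr ν.parts f.parts {ra₁, rc₂, rc₁} hagree
    have hTeq : (f.parts.support \ ({ra₁, rc₂, rc₁} : Finset ℕ))
        = (f.parts.support \ ({rc₂, ra₁, rc₁} : Finset ℕ)) := by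
      congr 1
      ext x
      simp only [Finset.mem_insert, Finset.mem_singleton]
      tauto
    rw [hsν, hNν, hTeq, hνra₁, hνrc₂, hνother rc₁ hc hne1]
  · -- ν.IsRemovableRow ra₁
    show ν.parts (ra₁ + 1) < ν.parts ra₁
    rw [hνra₁]
    by_cases hx : ra₁ + 1 = rc₂
    · rw [show ν.parts (ra₁ + 1) = f.parts rc₂ - 1 from by rw [hx]; exact hνrc₂]
      have h5 : f.parts (ra₁ + 1) ≤ f.parts ra₁ := f.antitone (by omega)
      rw [hx] at h5
      omega
    · rw [hνother (ra₁ + 1) hx (by omega)]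
      have : f.parts (ra₁ + 1) ≤ f.parts ra₁ := f.antitone (by omega)
      omega
  · -- ν.IsAddableRow ra₂
    by_cases h0 : ra₂ = 0
    · exact Or.inl h0
    · refine Or.inr ?_
      have hadd2' : f.parts ra₂ < f.parts (ra₂ - 1) := by
        rcases hadd2 with h | h
        · exact absurd h h0
        · exact h
      rw [hνother ra₂ (Ne.symm hne2) (Ne.symm ha)]
      by_cases hx : ra₂ - 1 = ra₁
      · rw [show ν.parts (ra₂ - 1) = f.parts ra₁ + 1 from by rw [hx, hνra₁]]
        have := f.antitone (show ra₁ ≤ ra₂ by omega)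
        omega
      · rw [hνother (ra₂ - 1) (by omega) hx]
        omega
  · -- g₂ ≠ ν
    intro e
    have := congrArg PartitionN.height e
    omega
  · -- g₂.rows = ν.transferRows ra₁ ra₂
    have hd1 : ra₁ ≠ ra₂ := ha
    have hd2 : ra₁ ≠ rc₂ := Ne.symm hne'
    have hd3 : ra₂ ≠ rc₂ := Ne.symm hne2
    have hsf := PartitionN.rows_split3 f hd1 hd2 hd3
    have hpos1 : ∀ m ∈ ((f.parts.support \ ({ra₁, ra₂, rc₂} : Finset ℕ)).val.map f.parts)
        + PartitionN.posM (f.parts ra₁) + PartitionN.posM (f.parts ra₂), 0 < m :=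
      PartitionN.mem_add_pos
        (PartitionN.mem_add_pos PartitionN.mem_map_sdiff_pos PartitionN.mem_posM_pos)
        PartitionN.mem_posM_pos
    have hpos2 : ∀ m ∈ ((f.parts.support \ ({ra₁, ra₂, rc₂} : Finset ℕ)).val.map f.parts)
        + PartitionN.posM (f.parts ra₁), 0 < m :=
      PartitionN.mem_add_pos PartitionN.mem_map_sdiff_pos PartitionN.mem_posM_pos
    have hg2rows : g₂.rows = ((f.parts.support \ ({ra₁, ra₂, rc₂} : Finset ℕ)).val.map f.parts)
        + PartitionN.posM (f.parts ra₁) + PartitionN.posM (f.parts rc₂ - 1)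
        + PartitionN.posM (f.parts ra₂ + 1) := by
      rw [hrows2, PartitionN.transferRows_eq, hsf,
        PartitionN.erase_add_posM _ _ hpos1, PartitionN.erase_add_posM _ _ hpos2]
    -- compute ν.rows with the order (rc₂, ra₂, ra₁)
    have hsν := PartitionN.rows_split3 ν hne2 hne' (Ne.symm ha)
    have hagree : ∀ j ∉ ({rc₂, ra₂, ra₁} : Finset ℕ), ν.parts j = f.parts j := by
      intro j hj
      simp only [Finset.mem_insert, Finset.mem_singleton] at hj
      push_neg at hj
      exact hνother j hj.1 hj.2.2
    have hNν := PartitionN.map_sdiff_congr ν.parts f.parts {rc₂, ra₂, ra₁} hagree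
    have hTeq : (f.parts.support \ ({rc₂, ra₂, ra₁} : Finset ℕ))
        = (f.parts.support \ ({ra₁, ra₂, rc₂} : Finset ℕ)) := by
      congr 1
      ext x
      simp only [Finset.mem_insert, Finset.mem_singleton]
      tauto
    have hνrows3 : ν.rows = ((f.parts.support \ ({ra₁, ra₂, rc₂} : Finset ℕ)).val.map f.parts)
        + PartitionN.posM (f.parts rc₂ - 1) + PartitionN.posM (f.parts ra₂)
        + PartitionN.posM (f.parts ra₁ + 1) := by
      rw [hsν, hNν, hTeq, hνrc₂, hνra₁, hνother ra₂ (Ne.symm hne2) (Ne.symm ha)]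
    have hpos5 : ∀ m ∈ ((f.parts.support \ ({ra₁, ra₂, rc₂} : Finset ℕ)).val.map f.parts)
        + PartitionN.posM (f.parts rc₂ - 1) + PartitionN.posM (f.parts ra₂), 0 < m :=
      PartitionN.mem_add_pos
        (PartitionN.mem_add_pos PartitionN.mem_map_sdiff_pos PartitionN.mem_posM_pos)
        PartitionN.mem_posM_pos
    have hpos6 : ∀ m ∈ ((f.parts.support \ ({ra₁, ra₂, rc₂} : Finset ℕ)).val.map f.parts)
        + PartitionN.posM (f.parts rc₂ - 1), 0 < m :=
      PartitionN.mem_add_pos PartitionN.mem_map_sdiff_pos PartitionN.mem_posM_pos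
    rw [PartitionN.transferRows_eq]
    rw [hνra₁]
    rw [hνother ra₂ (Ne.symm hne2) (Ne.symm ha)]
    rw [hνrows3]
    rw [PartitionN.erase_add_posM _ _ hpos5]
    rw [PartitionN.erase_add_posM _ _ hpos6]
    rw [show f.parts ra₁ + 1 - 1 = f.parts ra₁ from by omega]
    rw [hg2rows]
    abel
end
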